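/- arXiv:1602.02681 — 6 statements merged into one kernel-verified Lean document; each statement's English description precedes it below -/
import Mathlib

section
/- For every real number p, the Gaussian-regularized Fourier series of the sawtooth function converges to its pointwise value: lim_{ε→0⁺} Σ_{n=1}^{∞} (sin(2πnp)/(πn))·e^{−επn²} = −B̄₁(p). -/
open Real Filter Finset

lemma abel_identity (a w : ℕ → ℝ) (N : ℕ) :
    ∑ n ∈ range N, a n * w n =
      (∑ n ∈ range N, (w n - w (n + 1)) * (∑ k ∈ range (n + 1), a k))
        + (∑ k ∈ range N, a k) * w N := by
  induction N with
  | zero => simp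
  | succ N ih =>
      rw [sum_range_succ, ih, sum_range_succ (fun n => (w n - w (n+1)) * _), sum_range_succ a]
      ring

lemma tele_hasSum {w : ℕ → ℝ} (hw : Antitone w) (h0 : Tendsto w atTop (nhds 0)) :
    HasSum (fun n => w n - w (n + 1)) (w 0) := by
  have hsummable : Summable (fun n => w n - w (n + 1)) := by
    apply summable_of_sum_range_le (c := w 0)
    · intro n; simp [sub_nonneg, hw (Nat.le_succ n)]
    · intro n
      rw [Finset.sum_range_sub' w n]
      have h1 : (0:ℝ) ≤ w n := hw.le_of_tendsto h0 n
      linarith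
  rw [hsummable.hasSum_iff_tendsto_nat]
  simp_rw [Finset.sum_range_sub' w]
  simpa using tendsto_const_nhds.sub h0

lemma gaussian_abel {a : ℕ → ℝ} {C L : ℝ} (hC : ∀ n, |a n| ≤ C)
    (hL : Tendsto (fun N => ∑ n ∈ range N, a n) atTop (nhds L)) :
    Tendsto (fun ε : ℝ => ∑' n : ℕ, a n * Real.exp (-ε * π * ((n : ℝ) + 1) ^ 2))
      (nhdsWithin 0 (Set.Ioi 0)) (nhds L) := by
  set S : ℕ → ℝ := fun N => ∑ n ∈ range N, a n with hS
  -- bound on |S N - L|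
  obtain ⟨M, hM⟩ : ∃ M : ℝ, ∀ N, |S N - L| ≤ M := by
    have h := ((hL.sub_const L).abs).bddAbove_range
    obtain ⟨M, hM⟩ := h
    exact ⟨M, fun N => hM (Set.mem_range_self N)⟩
  have hM0 : 0 ≤ M := le_trans (abs_nonneg _) (hM 0)
  have hC0 : 0 ≤ C := le_trans (abs_nonneg _) (hC 0)
  -- facts about the weights for fixed ε > 0
  have wfacts : ∀ ε : ℝ, 0 < ε →
      ∀ w : ℕ → ℝ, (w = fun n : ℕ => Real.exp (-ε * π * ((n : ℝ) + 1) ^ 2)) →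
      Antitone w ∧ Tendsto w atTop (nhds 0) ∧ (∀ n, 0 < w n) ∧ (∀ n, w n ≤ 1) ∧
        Summable (fun n => a n * w n) := by
    intro ε hε w hw
    have hεπ : 0 < ε * π := mul_pos hε Real.pi_pos
    have hanti : Antitone w := by
      intro m n hmn
      rw [hw]
      apply Real.exp_le_exp.mpr
      have : ((m:ℝ)+1)^2 ≤ ((n:ℝ)+1)^2 := by
        have : (m:ℝ) ≤ n := Nat.cast_le.mpr hmn
        nlinarith
      nlinarith [mul_nonneg hεπ.le (sub_nonneg.mpr this)]
    have h0 : Tendsto w atTop (nhds 0) := by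
      rw [hw]
      have h2 : Tendsto (fun n : ℕ => ((n : ℝ) + 1) ^ 2) atTop atTop := by
        apply tendsto_atTop_mono (fun n : ℕ => ?_) tendsto_natCast_atTop_atTop
        nlinarith [sq_nonneg ((n:ℝ))]
      have h1 : Tendsto (fun n : ℕ => -ε * π * ((n : ℝ) + 1) ^ 2) atTop atBot :=
        h2.const_mul_atTop_of_neg (by nlinarith : -ε * π < 0)
      exact Real.tendsto_exp_atBot.comp h1
    have hpos : ∀ n, 0 < w n := fun n => hw ▸ Real.exp_pos _
    have hle1 : ∀ n, w n ≤ 1 := by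
      intro n
      rw [hw]
      apply Real.exp_le_one_iff.mpr
      nlinarith [mul_nonneg hεπ.le (sq_nonneg ((n:ℝ)+1))]
    refine ⟨hanti, h0, hpos, hle1, ?_⟩
    · -- summability: compare with geometric
      apply Summable.of_norm_bounded (g := fun n => C * Real.exp (-ε * π) ^ n)
      · exact (summable_geometric_of_lt_one (Real.exp_pos _).le
          (Real.exp_lt_one_iff.mpr (by nlinarith : -ε*π < 0))).mul_left C
      · intro n
        rw [Real.norm_eq_abs, abs_mul, hw]
        have h1 : |Real.exp (-ε * π * ((n : ℝ) + 1) ^ 2)| = Real.exp (-ε * π * ((n : ℝ) + 1) ^ 2) :=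
          abs_of_pos (Real.exp_pos _)
        rw [h1, ← Real.exp_nat_mul]
        have h2 : Real.exp (-ε * π * ((n : ℝ) + 1) ^ 2) ≤ Real.exp ((n:ℕ) * (-ε * π)) := by
          apply Real.exp_le_exp.mpr
          have : ((n:ℝ)) ≤ ((n:ℝ)+1)^2 := by nlinarith [sq_nonneg ((n:ℝ))]
          nlinarith [mul_nonneg hεπ.le (sub_nonneg.mpr this)]
        exact mul_le_mul (hC n) h2 (Real.exp_pos _).le hC0
  rw [Metric.tendsto_nhds]
  intro δ hδ
  obtain ⟨N₀, hN₀⟩ : ∃ N₀, ∀ N, N ≥ N₀ → |S N - L| ≤ δ/4 := by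
    obtain ⟨N₀, h⟩ := (Metric.tendsto_atTop.mp hL) (δ/4) (by linarith)
    exact ⟨N₀, fun N hN => by have := h N hN; rw [Real.dist_eq] at this; linarith⟩
  have hcont : Tendsto (fun ε : ℝ => (M + |L|) * (1 - Real.exp (-ε * π * ((N₀:ℝ)+1)^2)))
      (nhdsWithin 0 (Set.Ioi 0)) (nhds 0) := by
    have hc : ContinuousAt (fun ε : ℝ => (M + |L|) * (1 - Real.exp (-ε * π * ((N₀:ℝ)+1)^2))) 0 := by
      fun_prop
    have h := hc.tendsto.mono_left
      (nhdsWithin_le_nhds : nhdsWithin (0:ℝ) (Set.Ioi 0) ≤ nhds 0)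
    simpa using h
  filter_upwards [self_mem_nhdsWithin,
    hcont.eventually_lt_const (show (0:ℝ) < δ/2 by linarith)] with ε hε hsmall
  rw [Real.dist_eq]
  set w : ℕ → ℝ := fun n : ℕ => Real.exp (-ε * π * ((n:ℝ)+1)^2) with hwdef
  obtain ⟨hanti, h0, hpos, hle1, hsummable⟩ := wfacts ε hε w rfl
  have htele : HasSum (fun n => w n - w (n+1)) (w 0) := tele_hasSum hanti h0
  have hteleN : HasSum (fun n => w (n + N₀) - w (n + N₀ + 1)) (w N₀) := by
    have := tele_hasSum (w := fun n => w (n + N₀))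
      (fun m n hmn => hanti (by omega)) (h0.comp (tendsto_add_atTop_nat N₀))
    simpa [Nat.add_right_comm] using this
  have hwsub : ∀ n, (0:ℝ) ≤ w n - w (n+1) := fun n => sub_nonneg.mpr (hanti (Nat.le_succ n))
  have hcb : ∀ n, |(w n - w (n+1)) * (S (n+1) - L)| ≤ M * (w n - w (n+1)) := by
    intro n
    rw [abs_mul, abs_of_nonneg (hwsub n), mul_comm]
    exact mul_le_mul_of_nonneg_right (hM _) (hwsub n)
  have hsumc : Summable (fun n => (w n - w (n+1)) * (S (n+1) - L)) := by
    apply Summable.of_norm_bounded (g := fun n => M * (w n - w (n+1)))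
      (htele.summable.mul_left M)
    intro n; rw [Real.norm_eq_abs]; exact hcb n
  have hsumb : Summable (fun n => (w n - w (n+1)) * S (n+1)) := by
    apply Summable.congr (hsumc.add (htele.summable.mul_left L))
    intro n; ring
  have hkey : ∑' n, a n * w n = ∑' n, (w n - w (n+1)) * S (n+1) := by
    have hTa : Tendsto (fun N => ∑ n ∈ range N, a n * w n) atTop
        (nhds (∑' n, a n * w n)) := hsummable.hasSum.tendsto_sum_nat
    have hTb : Tendsto (fun N => ∑ n ∈ range N, a n * w n) atTop
        (nhds ((∑' n, (w n - w (n+1)) * S (n+1)) + L * 0)) := by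
      simp_rw [abel_identity a w]
      exact (hsumb.hasSum.tendsto_sum_nat).add (hL.mul h0)
    have := tendsto_nhds_unique hTa hTb
    simpa using this
  have hdecomp : ∑' n, (w n - w (n+1)) * S (n+1)
      = (∑' n, (w n - w (n+1)) * (S (n+1) - L)) + L * w 0 := by
    rw [← (htele.mul_left L).tsum_eq, ← Summable.tsum_add hsumc (htele.summable.mul_left L)]
    apply tsum_congr; intro n; ring
  -- head/tail split of the c-sum
  have hsplit := Summable.sum_add_tsum_nat_add N₀ hsumc
  have hhead : |∑ i ∈ range N₀, (w i - w (i+1)) * (S (i+1) - L)| ≤ M * (1 - w N₀) := by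
    calc |∑ i ∈ range N₀, (w i - w (i+1)) * (S (i+1) - L)|
        ≤ ∑ i ∈ range N₀, |(w i - w (i+1)) * (S (i+1) - L)| := Finset.abs_sum_le_sum_abs _ _
      _ ≤ ∑ i ∈ range N₀, M * (w i - w (i+1)) := Finset.sum_le_sum (fun i _ => hcb i)
      _ = M * (w 0 - w N₀) := by rw [← Finset.mul_sum, Finset.sum_range_sub' w]
      _ ≤ M * (1 - w N₀) := by
          apply mul_le_mul_of_nonneg_left _ hM0
          have := hle1 0; linarith
  have htail : |∑' i, (w (i + N₀) - w (i + N₀ + 1)) * (S (i + N₀ + 1) - L)| ≤ δ/4 := by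
    have hsumtail : Summable (fun i => (w (i + N₀) - w (i + N₀ + 1)) * (S (i + N₀ + 1) - L)) :=
      hsumc.comp_injective (add_left_injective N₀)
    calc |∑' i, (w (i + N₀) - w (i + N₀ + 1)) * (S (i + N₀ + 1) - L)|
        ≤ ∑' i, |(w (i + N₀) - w (i + N₀ + 1)) * (S (i + N₀ + 1) - L)| := by
          have hs : Summable (fun i => ‖(w (i + N₀) - w (i + N₀ + 1)) * (S (i + N₀ + 1) - L)‖) := by
            apply hsumtail.abs.congr; intro n; rw [Real.norm_eq_abs]
          simpa only [Real.norm_eq_abs] using norm_tsum_le_tsum_norm hs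
      _ ≤ ∑' i, (δ/4) * (w (i + N₀) - w (i + N₀ + 1)) := by
          apply Summable.tsum_le_tsum _ _ (hteleN.summable.mul_left (δ/4))
          · intro i
            rw [abs_mul, abs_of_nonneg (sub_nonneg.mpr (hanti (by omega))), mul_comm]
            apply mul_le_mul_of_nonneg_right (hN₀ _ (by omega))
            exact sub_nonneg.mpr (hanti (by omega))
          · exact hsumtail.abs
      _ = (δ/4) * w N₀ := (hteleN.mul_left (δ/4)).tsum_eq
      _ ≤ δ/4 := by
          have h1 := (hpos N₀).le; have h2 := hle1 N₀
          nlinarith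
  -- put it together
  show |∑' n, a n * w n - L| < δ
  have habs : |∑' n, a n * w n - L|
      ≤ M * (1 - w N₀) + δ/4 + |L| * (1 - w 0) := by
    have e1 : ∑' n, a n * w n - L
        = (∑ i ∈ range N₀, (w i - w (i+1)) * (S (i+1) - L))
          + (∑' i, (w (i + N₀) - w (i + N₀ + 1)) * (S (i + N₀ + 1) - L))
          + L * (w 0 - 1) := by
      rw [hkey, hdecomp, ← hsplit]; ring
    rw [e1]
    have h1 := abs_add_le ((∑ i ∈ range N₀, (w i - w (i+1)) * (S (i+1) - L))
          + (∑' i, (w (i + N₀) - w (i + N₀ + 1)) * (S (i + N₀ + 1) - L))) (L * (w 0 - 1))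
    have h2 := abs_add_le (∑ i ∈ range N₀, (w i - w (i+1)) * (S (i+1) - L))
          (∑' i, (w (i + N₀) - w (i + N₀ + 1)) * (S (i + N₀ + 1) - L))
    have h3 : |L * (w 0 - 1)| = |L| * (1 - w 0) := by
      rw [abs_mul, abs_of_nonpos (by have := hle1 0; linarith : w 0 - 1 ≤ 0)]; ring_nf
    linarith [hhead, htail]
  -- final numeric estimate
  have hw0N : w N₀ ≤ w 0 := hanti (Nat.zero_le N₀)
  have hfin : M * (1 - w N₀) + |L| * (1 - w 0) ≤ (M + |L|) * (1 - w N₀) := by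
    have h1 := abs_nonneg L
    have h2 : 1 - w 0 ≤ 1 - w N₀ := by linarith
    have h3 : (0:ℝ) ≤ 1 - w N₀ := by have := hle1 N₀; linarith
    nlinarith
  have : (M + |L|) * (1 - w N₀) < δ/2 := hsmall
  linarith

lemma sin_partial_sums_tendsto {θ : ℝ} (h1 : 0 < θ) (h2 : θ < 2 * π) :
    Tendsto (fun N => ∑ n ∈ range N, Real.sin (((n:ℝ)+1) * θ) / (π * ((n:ℝ)+1))) atTop
      (nhds ((π - θ) / (2 * π))) := by
  have hπ := Real.pi_pos
  set e : ℂ := Complex.exp (θ * Complex.I) with he_def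
  have he1 : e ≠ 1 := by
    rw [he_def, Ne, Complex.exp_eq_one_iff]
    rintro ⟨n, hn⟩
    have hIm := congrArg Complex.im hn
    simp [Complex.mul_im, Complex.mul_re] at hIm
    have : θ = (n : ℝ) * (2 * π) := by linarith
    rcases le_or_gt (n:ℝ) 0 with h | h
    · nlinarith
    · have : (1:ℝ) ≤ n := by exact_mod_cast (by exact_mod_cast h : (0:ℤ) < n)
      nlinarith
  -- bounded partial sums of sin((i+1)θ)
  have hb : ∀ n, ‖∑ i ∈ range n, Real.sin (((i:ℝ)+1) * θ)‖ ≤ 2 / ‖e - 1‖ := by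
    intro n
    have hsum : ∑ i ∈ range n, Real.sin (((i:ℝ)+1) * θ)
        = (∑ i ∈ range n, e ^ (i+1)).im := by
      rw [Complex.im_sum]
      apply Finset.sum_congr rfl
      intro i _
      rw [he_def, ← Complex.exp_nat_mul]
      have harg : ((i+1 : ℕ) : ℂ) * (↑θ * Complex.I) = ((((i:ℝ)+1) * θ : ℝ) : ℂ) * Complex.I := by
        push_cast; ring
      rw [harg, Complex.exp_ofReal_mul_I_im]
    rw [Real.norm_eq_abs, hsum]
    have hgeom : ∑ i ∈ range n, e ^ (i+1) = e * ((e ^ n - 1) / (e - 1)) := by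
      rw [← geom_sum_eq he1 n, Finset.mul_sum]
      apply Finset.sum_congr rfl
      intro i _; ring
    calc |(∑ i ∈ range n, e ^ (i+1)).im| ≤ ‖∑ i ∈ range n, e ^ (i+1)‖ :=
          Complex.abs_im_le_norm _
      _ = ‖e‖ * (‖e ^ n - 1‖ / ‖e - 1‖) := by rw [hgeom, norm_mul, norm_div]
      _ ≤ 1 * (2 / ‖e - 1‖) := by
          have h1' : ‖e‖ = 1 := by rw [he_def]; exact Complex.norm_exp_ofReal_mul_I θ
          have h2' : ‖e ^ n - 1‖ ≤ 2 := by
            calc ‖e ^ n - 1‖ ≤ ‖e ^ n‖ + ‖(1:ℂ)‖ := norm_sub_le _ _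
              _ = 2 := by rw [norm_pow, h1']; norm_num
          rw [h1']
          gcongr
      _ = 2 / ‖e - 1‖ := one_mul _
  -- Dirichlet test
  have hf_anti : Antitone (fun i : ℕ => 1 / (π * ((i:ℝ)+1))) := by
    intro m n hmn
    have : ((m:ℝ)+1) ≤ ((n:ℝ)+1) := by exact_mod_cast by omega
    apply one_div_le_one_div_of_le (by positivity)
    nlinarith
  have hf0 : Tendsto (fun i : ℕ => 1 / (π * ((i:ℝ)+1))) atTop (nhds 0) := by
    simp_rw [one_div]
    apply Tendsto.inv_tendsto_atTop
    apply Tendsto.const_mul_atTop hπ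
    exact tendsto_atTop_add_const_right _ _ tendsto_natCast_atTop_atTop
  have hcauchy : CauchySeq (fun n => ∑ i ∈ range n,
      (1 / (π * ((i:ℝ)+1))) • Real.sin (((i:ℝ)+1) * θ)) :=
    hf_anti.cauchySeq_series_mul_of_tendsto_zero_of_bounded hf0 hb
  obtain ⟨L, hLt⟩ := cauchySeq_tendsto_of_complete hcauchy
  have hLt' : Tendsto (fun N => ∑ n ∈ range N, Real.sin (((n:ℝ)+1) * θ) / (π * ((n:ℝ)+1)))
      atTop (nhds L) := by
    apply hLt.congr
    intro N
    apply Finset.sum_congr rfl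
    intro i _
    rw [smul_eq_mul]
    ring
  -- identify L via Abel's limit theorem
  suffices hLeq : L = (π - θ) / (2 * π) by rwa [hLeq] at hLt'
  -- power series coefficients
  set g : ℕ → ℝ := fun n => Real.sin ((n:ℝ) * θ) / (π * (n:ℝ)) with hg_def
  have hg : Tendsto (fun N => ∑ i ∈ range N, g i) atTop (nhds L) := by
    rw [← tendsto_add_atTop_iff_nat 1]
    apply hLt'.congr
    intro N
    rw [Finset.sum_range_succ' g N]
    have hg0 : g 0 = 0 := by simp [hg_def]
    rw [hg0, add_zero]
    apply Finset.sum_congr rfl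
    intro i _
    simp only [hg_def]
    push_cast
    ring_nf
  have hAbel := Real.tendsto_tsum_powerSeries_nhdsWithin_lt hg
  -- the other limit of the same function
  have hAbel2 : Tendsto (fun x : ℝ => ∑' n, g n * x ^ n) (nhdsWithin 1 (Set.Iio 1))
      (nhds ((π - θ) / (2 * π))) := by
    have hsinpos : 0 < Real.sin (θ/2) := Real.sin_pos_of_pos_of_lt_pi (by linarith) (by linarith)
    have hcos2 : Real.cos θ = 1 - 2 * Real.sin (θ/2)^2 := by
      have ht := Real.cos_two_mul (θ/2)
      have hp := Real.sin_sq_add_cos_sq (θ/2)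
      have : 2 * (θ/2) = θ := by ring
      rw [this] at ht
      nlinarith
    have hsin2 : Real.sin θ = 2 * Real.sin (θ/2) * Real.cos (θ/2) := by
      have := Real.sin_two_mul (θ/2)
      have h2 : 2 * (θ/2) = θ := by ring
      rw [h2] at this
      linarith
    have hre : e.re = Real.cos θ := by rw [he_def]; exact Complex.exp_ofReal_mul_I_re θ
    have him0 : e.im = Real.sin θ := by rw [he_def]; exact Complex.exp_ofReal_mul_I_im θ
    have hmem : (1 - e) ∈ Complex.slitPlane := by
      apply Complex.mem_slitPlane_iff.mpr
      left
      simp only [Complex.sub_re, Complex.one_re, hre]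
      nlinarith
    set φ : ℝ → ℝ := fun x => -(Complex.log (1 - ↑x * e)).im * (1/π) with hφ_def
    have hcont : ContinuousAt φ 1 := by
      have hinner : ContinuousAt (fun x : ℝ => 1 - ↑x * e) 1 := by fun_prop
      have hlog : ContinuousAt (fun x : ℝ => Complex.log (1 - ↑x * e)) 1 :=
        (continuousAt_clog (by simpa using hmem)).comp hinner
      exact ((Complex.continuous_im.continuousAt.comp hlog).neg).mul continuousAt_const
    have hval : φ 1 = (π - θ) / (2 * π) := by
      have key : 1 - ((1:ℝ):ℂ) * e = ((2 * Real.sin (θ/2) : ℝ) : ℂ) *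
          (Complex.cos (((θ - π)/2 : ℝ) : ℂ) + Complex.sin (((θ - π)/2 : ℝ) : ℂ) * Complex.I) := by
        have hc : Real.cos ((θ - π)/2) = Real.sin (θ/2) := by
          rw [show (θ - π)/2 = θ/2 - π/2 by ring, Real.cos_sub_pi_div_two]
        have hs : Real.sin ((θ - π)/2) = -Real.cos (θ/2) := by
          rw [show (θ - π)/2 = θ/2 - π/2 by ring, Real.sin_sub_pi_div_two]
        apply Complex.ext
        · simp only [Complex.sub_re, Complex.one_re, Complex.mul_re, Complex.ofReal_re,
            Complex.ofReal_im, Complex.add_re, Complex.add_im, Complex.mul_im,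
            Complex.cos_ofReal_re, Complex.cos_ofReal_im, Complex.sin_ofReal_re,
            Complex.sin_ofReal_im, Complex.I_re, Complex.I_im, hre, him0, hc, hs]
          nlinarith
        · simp only [Complex.sub_im, Complex.one_im, Complex.mul_im, Complex.mul_re,
            Complex.ofReal_re, Complex.ofReal_im, Complex.add_re, Complex.add_im,
            Complex.cos_ofReal_re, Complex.cos_ofReal_im, Complex.sin_ofReal_re,
            Complex.sin_ofReal_im, Complex.I_re, Complex.I_im, hre, him0, hc, hs]
          nlinarith
      have harg : (1 - ((1:ℝ):ℂ) * e).arg = (θ - π)/2 := by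
        rw [key, Complex.arg_real_mul _ (by positivity : (0:ℝ) < 2 * Real.sin (θ/2)),
          Complex.arg_cos_add_sin_mul_I ⟨by linarith, by linarith⟩]
      rw [hφ_def]
      simp only [Complex.log_im, harg]
      field_simp
      try ring
    have heval : Tendsto φ (nhdsWithin 1 (Set.Iio 1)) (nhds ((π - θ)/(2*π))) := by
      rw [← hval]
      exact hcont.tendsto.mono_left nhdsWithin_le_nhds
    have hev : ∀ᶠ x in nhdsWithin (1:ℝ) (Set.Iio 1), φ x = ∑' n, g n * x ^ n := by
      filter_upwards [Ioo_mem_nhdsLT_of_mem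
        (show (1:ℝ) ∈ Set.Ioc (0:ℝ) 1 from ⟨by norm_num, le_refl 1⟩)] with x hx
      have hx0 : 0 < x := hx.1
      have hx1 : x < 1 := hx.2
      have hnorm : ‖(x:ℂ) * e‖ < 1 := by
        rw [norm_mul, he_def, Complex.norm_exp_ofReal_mul_I, mul_one, Complex.norm_real,
          Real.norm_eq_abs, abs_of_pos hx0]
        exact hx1
      have hsum := Complex.hasSum_taylorSeries_neg_log hnorm
      have him := (Complex.hasSum_im hsum).mul_right (1/π)
      have hterm : ∀ n : ℕ, (((x:ℂ) * e) ^ n / (n:ℂ)).im * (1/π) = g n * x ^ n := by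
        intro n
        rcases Nat.eq_zero_or_pos n with rfl | hn
        · simp [hg_def]
        · have hform : ((x:ℂ) * e) ^ n / (n:ℂ)
              = (((x^n / n : ℝ)) : ℂ) * Complex.exp ((((n:ℝ) * θ : ℝ) : ℂ) * Complex.I) := by
            rw [mul_pow, he_def, ← Complex.exp_nat_mul]
            have harg2 : ((n:ℕ):ℂ) * (↑θ * Complex.I) = (((n:ℝ) * θ : ℝ) : ℂ) * Complex.I := by
              push_cast; ring
            rw [harg2]
            push_cast
            ring
          rw [hform]
          have him2 : ((((x^n / n : ℝ)) : ℂ)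
              * Complex.exp ((((n:ℝ) * θ : ℝ) : ℂ) * Complex.I)).im
              = (x^n / n) * Real.sin ((n:ℝ) * θ) := by
            rw [Complex.im_ofReal_mul, Complex.exp_ofReal_mul_I_im]
          rw [him2]
          rw [hg_def]
          have hnR : (0:ℝ) < n := by exact_mod_cast hn
          field_simp
      have hgsum : HasSum (fun n => g n * x ^ n) ((-(Complex.log (1 - ↑x * e))).im * (1/π)) := by
        have hfun : (fun n : ℕ => (((x:ℂ) * e) ^ n / (n:ℂ)).im * (1/π))
            = fun n => g n * x ^ n := funext hterm
        rw [hfun] at him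
        exact him
      rw [hφ_def]
      simp only [Complex.neg_im] at hgsum ⊢
      rw [hgsum.tsum_eq]
      try ring
    exact Tendsto.congr' hev heval
  exact tendsto_nhds_unique hAbel hAbel2

/-- The first periodic Bernoulli polynomial (sawtooth function):
`B̄₁(x) = x − ⌊x⌋ − 1/2` if `x ∉ ℤ`, and `B̄₁(x) = 0` if `x ∈ ℤ`. -/
noncomputable def sawtooth (x : ℝ) : ℝ :=
  open scoped Classical in
  if ∃ n : ℤ, x = (n : ℝ) then 0 else Int.fract x - 1/2

/-- The Gaussian-regularized Fourier series of the sawtooth function converges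
pointwise to `−B̄₁(p)` as the regularization parameter `ε` tends to `0⁺`. -/
theorem tendsto_regularized_sawtooth_series (p : ℝ) :
    Filter.Tendsto
      (fun ε : ℝ => ∑' n : ℕ,
        Real.sin (2 * π * ((n : ℝ) + 1) * p) / (π * ((n : ℝ) + 1)) *
          Real.exp (-ε * π * ((n : ℝ) + 1) ^ 2))
      (nhdsWithin 0 (Set.Ioi 0)) (nhds (-sawtooth p)) := by
  have hπ := Real.pi_pos
  by_cases hint : ∃ n : ℤ, p = (n : ℝ)
  · -- integer case: every term vanishes
    obtain ⟨m, rfl⟩ := hint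
    have hsaw : sawtooth (m:ℝ) = 0 := by rw [sawtooth, if_pos ⟨m, rfl⟩]
    rw [hsaw, neg_zero]
    have hzero : ∀ ε : ℝ, (∑' n : ℕ,
        Real.sin (2 * π * ((n : ℝ) + 1) * (m:ℝ)) / (π * ((n : ℝ) + 1)) *
          Real.exp (-ε * π * ((n : ℝ) + 1) ^ 2)) = 0 := by
      intro ε
      have : ∀ n : ℕ, Real.sin (2 * π * ((n : ℝ) + 1) * (m:ℝ)) = 0 := by
        intro n
        have harg : 2 * π * ((n : ℝ) + 1) * (m:ℝ) = ((2 * ((n:ℤ)+1) * m : ℤ) : ℝ) * π := by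
          push_cast; ring
        rw [harg, Real.sin_int_mul_pi]
      simp only [this, zero_div, zero_mul, tsum_zero]
    simp only [hzero]
    exact tendsto_const_nhds
  · -- non-integer case
    have hfrac0 : 0 < Int.fract p := by
      rw [Int.fract_pos]
      intro h
      exact hint ⟨⌊p⌋, h⟩
    have hfrac1 : Int.fract p < 1 := Int.fract_lt_one p
    set θ : ℝ := 2 * π * Int.fract p with hθ_def
    have hθ1 : 0 < θ := by positivity
    have hθ2 : θ < 2 * π := by nlinarith
    have hL := sin_partial_sums_tendsto hθ1 hθ2
    have hC : ∀ n : ℕ, |Real.sin (((n:ℝ)+1) * θ) / (π * ((n:ℝ)+1))| ≤ 1 := by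
      intro n
      rw [abs_div]
      have hden : (0:ℝ) < π * ((n:ℝ)+1) := by positivity
      rw [div_le_one (by rwa [abs_of_pos hden])]
      calc |Real.sin (((n:ℝ)+1) * θ)| ≤ 1 := Real.abs_sin_le_one _
        _ ≤ |π * ((n:ℝ)+1)| := by
            rw [abs_of_pos hden]
            nlinarith [Real.pi_gt_three, (Nat.cast_nonneg n : (0:ℝ) ≤ n)]
    have hmain := gaussian_abel hC hL
    have hfun : ∀ ε : ℝ, (∑' n : ℕ,
        Real.sin (2 * π * ((n : ℝ) + 1) * p) / (π * ((n : ℝ) + 1)) *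
          Real.exp (-ε * π * ((n : ℝ) + 1) ^ 2))
        = ∑' n : ℕ, Real.sin (((n:ℝ)+1) * θ) / (π * ((n:ℝ)+1)) *
            Real.exp (-ε * π * ((n : ℝ) + 1) ^ 2) := by
      intro ε
      apply tsum_congr
      intro n
      have hsin : Real.sin (2 * π * ((n : ℝ) + 1) * p) = Real.sin (((n:ℝ)+1) * θ) := by
        have harg : 2 * π * ((n : ℝ) + 1) * p
            = ((n:ℝ)+1) * θ + (((n:ℤ)+1) * ⌊p⌋ : ℤ) * (2 * π) := by
          rw [hθ_def, Int.fract]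
          push_cast
          ring
        rw [harg, Real.sin_add_int_mul_two_pi]
      rw [hsin]
    have hval : (π - θ) / (2 * π) = -sawtooth p := by
      rw [sawtooth, if_neg hint, hθ_def]
      field_simp
      ring
    rw [← hval]
    simp only [hfun]
    exact hmain
end

section
/- Let P ⊂ ℝ^d be a polytope (the convex hull of a finite set of points), let g : ℝ^d → ℝ be continuous, and let f be the function equal to g on P and equal to 0 outside P. Then for every x ∈ ℝ^d, lim_{ε→0⁺} ∫_{ℝ^d} f(y)·G_ε(x−y) dy = f(x)·ω_P(x), where ω_P(x) = ∫_{K_x} e^{−π‖v‖²} dv and K_x = {v ∈ ℝ^d : ∃ δ>0 with x+δv ∈ P} is the cone of feasible directions of P at x. -/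
open Real MeasureTheory

lemma my_integrable_gauss (d : ℕ) {b : ℝ} (hb : 0 < b) :
    Integrable (fun v : EuclideanSpace ℝ (Fin d) => Real.exp (-b * ‖v‖ ^ 2)) := by
  have h := GaussianFourier.integrable_cexp_neg_mul_sq_norm_add
    (V := EuclideanSpace ℝ (Fin d)) (b := (b : ℂ)) (by simpa using hb) 0 0
  have h2 : Integrable (fun v : EuclideanSpace ℝ (Fin d) =>
      Complex.exp (-(b : ℂ) * (‖v‖ : ℂ) ^ 2)) := by simpa using h
  refine h2.re.congr (Filter.Eventually.of_forall fun v => ?_)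
  have : (-(b : ℂ) * (‖v‖ : ℂ) ^ 2) = ((-b * ‖v‖ ^ 2 : ℝ) : ℂ) := by push_cast; ring
  simp only [this]
  exact Complex.exp_ofReal_re _

/-- segment lemma : if `x ∈ P`, `x + δ • v ∈ P`, `0 ≤ t ≤ δ` then `x + t • v ∈ P`. -/
lemma my_seg {E : Type*} [NormedAddCommGroup E] [NormedSpace ℝ E] {P : Set E}
    (hP : Convex ℝ P) {x v : E} {δ t : ℝ} (hx : x ∈ P) (hv : x + δ • v ∈ P)
    (hδ : 0 < δ) (ht0 : 0 ≤ t) (htδ : t ≤ δ) : x + t • v ∈ P := by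
  have h := hP hx hv (a := 1 - t / δ) (b := t / δ)
    (by rw [sub_nonneg]; exact div_le_one_of_le₀ htδ hδ.le)
    (by positivity) (by ring)
  have : (1 - t / δ) • x + (t / δ) • (x + δ • v) = x + t • v := by
    rw [smul_add, smul_smul]
    rw [div_mul_cancel₀ _ hδ.ne']
    module
  rwa [this] at h

/-- Convolution of a continuous function supported on a polytope with the heat kernel
`G_ε(x) = ε^{−d/2} e^{−π‖x‖²/ε}` converges, as `ε → 0⁺`, to the value of the function
times the solid angle `ω_P(x)`, the Gaussian measure of the cone of feasible directions
of the polytope `P` at `x`. -/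
theorem tendsto_heat_convolution_solid_angle {d : ℕ}
    (S : Finset (EuclideanSpace ℝ (Fin d)))
    (g : EuclideanSpace ℝ (Fin d) → ℝ) (hg : Continuous g)
    (f : EuclideanSpace ℝ (Fin d) → ℝ)
    (hf : ∀ y, f y = open scoped Classical in if y ∈ convexHull ℝ (S : Set (EuclideanSpace ℝ (Fin d)))
      then g y else 0)
    (x : EuclideanSpace ℝ (Fin d)) :
    Filter.Tendsto
      (fun ε : ℝ => ∫ y,
        f y * (ε ^ (-(d : ℝ) / 2) * Real.exp (-π * ‖x - y‖ ^ 2 / ε)))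
      (nhdsWithin 0 (Set.Ioi 0))
      (nhds (f x * ∫ v in {v : EuclideanSpace ℝ (Fin d) |
          ∃ δ : ℝ, 0 < δ ∧ x + δ • v ∈ convexHull ℝ (S : Set (EuclideanSpace ℝ (Fin d)))},
        Real.exp (-π * ‖v‖ ^ 2))) := by
  classical
  set P : Set (EuclideanSpace ℝ (Fin d)) := convexHull ℝ (S : Set (EuclideanSpace ℝ (Fin d)))
    with hPdef
  have hPc : IsCompact P := S.finite_toSet.isCompact_convexHull ℝ
  have hPclosed : IsClosed P := hPc.isClosed
  have hPconv : Convex ℝ P := convex_convexHull ℝ _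
  set K : Set (EuclideanSpace ℝ (Fin d)) := {v | ∃ δ : ℝ, 0 < δ ∧ x + δ • v ∈ P} with hKdef
  -- bound on f
  obtain ⟨C, hC⟩ := hPc.exists_bound_of_continuousOn hg.continuousOn
  set M : ℝ := max C 0 with hMdef
  have hfb : ∀ z, |f z| ≤ M := by
    intro z
    rw [hf z]
    split_ifs with h
    · exact le_trans (hC z h) (le_max_left _ _)
    · simp [hMdef]
  -- f measurable
  have hfm : Measurable f := by
    have hfi : f = P.indicator g := by
      ext z; rw [hf z, Set.indicator_apply]
    rw [hfi]
    exact hg.measurable.indicator hPclosed.measurableSet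
  -- the family after change of variables
  set F : ℝ → EuclideanSpace ℝ (Fin d) → ℝ :=
    fun ε v => f (x + Real.sqrt ε • v) * Real.exp (-π * ‖v‖ ^ 2) with hFdef
  -- change of variables
  have key : ∀ ε ∈ Set.Ioi (0 : ℝ),
      (∫ y, f y * (ε ^ (-(d : ℝ) / 2) * Real.exp (-π * ‖x - y‖ ^ 2 / ε)))
        = ∫ v, F ε v := by
    intro ε hε
    rw [Set.mem_Ioi] at hε
    set c : ℝ := Real.sqrt ε with hcdef
    have hc : 0 < c := Real.sqrt_pos.2 hε
    have hc2 : c ^ 2 = ε := Real.sq_sqrt hε.le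
    set G : EuclideanSpace ℝ (Fin d) → ℝ :=
      fun w => f (x + w) * Real.exp (-π * ‖w‖ ^ 2 / ε) with hGdef
    have h1 : ∀ v, F ε v = G (c • v) := by
      intro v
      have hn : ‖c • v‖ ^ 2 = ε * ‖v‖ ^ 2 := by
        rw [norm_smul, Real.norm_eq_abs, mul_pow, sq_abs, hc2]
      simp only [hFdef, hGdef, hn]
      rw [mul_comm ε]
      simp only [mul_div_assoc]
      rw [div_self hε.ne', mul_one]
    have h2 : (∫ v, F ε v) = (c ^ d)⁻¹ • ∫ w, G w := by
      simp only [h1]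
      rw [Measure.integral_comp_smul_of_nonneg volume G c (hR := hc.le),
        finrank_euclideanSpace_fin]
    have h3 : (∫ w, G w) = ∫ y, f y * Real.exp (-π * ‖x - y‖ ^ 2 / ε) := by
      have := integral_add_left_eq_self
        (μ := (volume : Measure (EuclideanSpace ℝ (Fin d))))
        (f := fun y => f y * Real.exp (-π * ‖x - y‖ ^ 2 / ε)) x
      rw [← this]
      congr 1
      ext w
      simp only [hGdef]
      congr 3
      have : x - (x + w) = -w := by abel
      rw [this, norm_neg]
    have h4 : ((c : ℝ) ^ d)⁻¹ = ε ^ (-(d : ℝ) / 2) := by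
      rw [hcdef, Real.sqrt_eq_rpow, ← Real.rpow_natCast (ε ^ (1/2 : ℝ)) d,
        ← Real.rpow_mul hε.le, ← Real.rpow_neg_one (ε ^ (1/2 * (d:ℝ))),
        ← Real.rpow_mul hε.le]
      congr 1
      ring
    rw [h2, h3, h4, smul_eq_mul, ← integral_const_mul]
    congr 1
    ext y
    ring
  -- limit function
  set Φ : EuclideanSpace ℝ (Fin d) → ℝ :=
    fun v => f x * K.indicator (fun v => Real.exp (-π * ‖v‖ ^ 2)) v with hΦdef
  -- the integral of the limit
  have hint : (∫ v, Φ v) = f x * ∫ v in K, Real.exp (-π * ‖v‖ ^ 2) := by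
    by_cases hx : x ∈ P
    · have hKm : MeasurableSet K := by
        have hKU : K = ⋃ n : ℕ,
            (fun v : EuclideanSpace ℝ (Fin d) => x + ((n : ℝ) + 1)⁻¹ • v) ⁻¹' P := by
          ext v
          simp only [Set.mem_iUnion, Set.mem_preimage, hKdef, Set.mem_setOf_eq]
          constructor
          · rintro ⟨δ, hδ, hδP⟩
            obtain ⟨n, hn⟩ := exists_nat_gt δ⁻¹
            refine ⟨n, my_seg hPconv hx hδP hδ (by positivity) ?_⟩
            rw [inv_le_comm₀ (by positivity) hδ]
            exact le_trans hn.le (by linarith)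
          · rintro ⟨n, hn⟩
            exact ⟨((n : ℝ) + 1)⁻¹, by positivity, hn⟩
        rw [hKU]
        refine MeasurableSet.iUnion fun n => hPclosed.measurableSet.preimage ?_
        exact (continuous_const.add (continuous_const_smul _)).measurable
      rw [hΦdef]
      simp only
      rw [integral_const_mul, integral_indicator hKm]
    · have hfx : f x = 0 := by rw [hf x, if_neg hx]
      simp [hΦdef, hfx]
  rw [← hint]
  -- dominated convergence
  have main : Filter.Tendsto (fun ε : ℝ => ∫ v, F ε v) (nhdsWithin 0 (Set.Ioi 0))
      (nhds (∫ v, Φ v)) := by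
    apply tendsto_integral_filter_of_dominated_convergence
      (bound := fun v => M * Real.exp (-π * ‖v‖ ^ 2))
    · filter_upwards with ε
      apply Measurable.aestronglyMeasurable
      have hc1 : Continuous fun v : EuclideanSpace ℝ (Fin d) => x + Real.sqrt ε • v :=
        continuous_const.add (continuous_const_smul _)
      have hc2 : Continuous fun v : EuclideanSpace ℝ (Fin d) =>
          Real.exp (-π * ‖v‖ ^ 2) :=
        Real.continuous_exp.comp (continuous_const.mul (continuous_norm.pow 2))
      exact (hfm.comp hc1.measurable).mul hc2.measurable
    · filter_upwards with ε
      filter_upwards with v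
      simp only [hFdef]
      rw [norm_mul, Real.norm_eq_abs, Real.norm_eq_abs, abs_of_pos (Real.exp_pos _)]
      exact mul_le_mul_of_nonneg_right (hfb _) (Real.exp_pos _).le
    · exact (my_integrable_gauss d (by positivity : (0:ℝ) < π)).const_mul M
    · filter_upwards with v
      -- pointwise convergence
      have hm : Filter.Tendsto (fun ε : ℝ => x + Real.sqrt ε • v)
          (nhdsWithin 0 (Set.Ioi 0)) (nhds x) := by
        have h1 : Filter.Tendsto (fun ε : ℝ => Real.sqrt ε)
            (nhdsWithin 0 (Set.Ioi 0)) (nhds 0) := by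
          have := (Real.continuous_sqrt.tendsto 0).mono_left
            (nhdsWithin_le_nhds (s := Set.Ioi (0:ℝ)))
          simpa using this
        have h2 : Filter.Tendsto (fun ε : ℝ => x + Real.sqrt ε • v)
            (nhdsWithin 0 (Set.Ioi 0)) (nhds (x + (0:ℝ) • v)) :=
          Filter.Tendsto.add tendsto_const_nhds (h1.smul_const v)
        simpa using h2
      by_cases hx : x ∈ P
      · by_cases hv : v ∈ K
        · obtain ⟨δ, hδ, hδP⟩ := hv
          have hΦv : Φ v = g x * Real.exp (-π * ‖v‖ ^ 2) := by
            rw [hΦdef]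
            simp only
            rw [Set.indicator_of_mem (show v ∈ K from ⟨δ, hδ, hδP⟩), hf x, if_pos hx]
          rw [hΦv]
          have hev : ∀ᶠ ε in nhdsWithin 0 (Set.Ioi 0),
              F ε v = g (x + Real.sqrt ε • v) * Real.exp (-π * ‖v‖ ^ 2) := by
            filter_upwards [Ioo_mem_nhdsGT_of_mem
              (show (0:ℝ) ∈ Set.Ico (0:ℝ) (δ ^ 2) from ⟨le_refl _, by positivity⟩)] with ε hε
            obtain ⟨hε0, hεδ⟩ := hε
            have hsq : Real.sqrt ε ≤ δ := by
              rw [show δ = Real.sqrt (δ ^ 2) by rw [Real.sqrt_sq hδ.le]]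
              exact Real.sqrt_le_sqrt hεδ.le
            have hmem : x + Real.sqrt ε • v ∈ P :=
              my_seg hPconv hx hδP hδ (Real.sqrt_nonneg _) hsq
            simp only [hFdef]
            rw [hf (x + Real.sqrt ε • v), if_pos hmem]
          apply Filter.Tendsto.congr' (Filter.EventuallyEq.symm hev)
          exact ((hg.tendsto x).comp hm).mul tendsto_const_nhds
        · have hΦv : Φ v = 0 := by
            rw [hΦdef]; simp only
            rw [Set.indicator_of_notMem hv, mul_zero]
          rw [hΦv]
          have hev : ∀ᶠ ε in nhdsWithin 0 (Set.Ioi 0), F ε v = 0 := by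
            filter_upwards [self_mem_nhdsWithin] with ε hε
            rw [Set.mem_Ioi] at hε
            have hnm : x + Real.sqrt ε • v ∉ P := fun h =>
              hv ⟨Real.sqrt ε, Real.sqrt_pos.2 hε, h⟩
            simp only [hFdef]
            rw [hf (x + Real.sqrt ε • v), if_neg hnm, zero_mul]
          exact Filter.Tendsto.congr' (Filter.EventuallyEq.symm hev) tendsto_const_nhds
      · have hfx : f x = 0 := by rw [hf x, if_neg hx]
        have hΦv : Φ v = 0 := by rw [hΦdef]; simp [hfx]
        rw [hΦv]
        have hev : ∀ᶠ ε in nhdsWithin 0 (Set.Ioi 0), F ε v = 0 := by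
          filter_upwards [hm (hPclosed.isOpen_compl.mem_nhds hx)] with ε hε
          simp only [hFdef]
          rw [hf (x + Real.sqrt ε • v), if_neg hε, zero_mul]
        exact Filter.Tendsto.congr' (Filter.EventuallyEq.symm hev) tendsto_const_nhds
  apply main.congr'
  filter_upwards [self_mem_nhdsWithin] with ε hε
  exact (key ε hε).symm
end

section
/- Let h and k be coprime positive integers and let t be a positive integer. Then A_Δ(t) = (hk/2)·t² + (1/12)·(h/k + 1/(hk) + k/h) − 1/4 − s(h,k) − s(k,h). -/
open Real Finset

/-- The classical Dedekind sum `s(h,k) = Σ_{r=0}^{k−1} B̄₁(hr/k)·B̄₁(r/k)`. -/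
noncomputable def dedekindSum (h k : ℕ) : ℝ :=
  ∑ r ∈ Finset.range k, sawtooth ((h : ℝ) * r / k) * sawtooth ((r : ℝ) / k)

/-- The indicator function of `ℤ ⊆ ℝ`. -/
noncomputable def intIndicator (x : ℝ) : ℝ :=
  open scoped Classical in
  if ∃ n : ℤ, x = (n : ℝ) then 1 else 0

/-- Macdonald's solid-angle sum `A_Δ(t)` of the dilate `tΔ` of the triangle `Δ`
with vertices `(0,0)`, `(h,0)`, `(0,k)`. -/
noncomputable def solidAngleSum (h k : ℕ) (t : ℝ) : ℝ :=
  (Set.ncard {p : ℤ × ℤ | 0 < p.1 ∧ 0 < p.2 ∧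
      (k : ℝ) * p.1 + (h : ℝ) * p.2 < (h : ℝ) * k * t} : ℝ)
  + 1/2 * ((Set.ncard {x : ℤ | 0 < (x : ℝ) ∧ (x : ℝ) < (h : ℝ) * t} : ℝ)
      + (Set.ncard {y : ℤ | 0 < (y : ℝ) ∧ (y : ℝ) < (k : ℝ) * t} : ℝ)
      + (Set.ncard {p : ℤ × ℤ | 0 < p.1 ∧ 0 < p.2 ∧
          (k : ℝ) * p.1 + (h : ℝ) * p.2 = (h : ℝ) * k * t} : ℝ))
  + 1/4
  + intIndicator ((h : ℝ) * t) * Real.arctan ((k : ℝ) / h) / (2 * π)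
  + intIndicator ((k : ℝ) * t) * Real.arctan ((h : ℝ) / k) / (2 * π)

lemma sum_mod_eq {M : Type*} [AddCommMonoid M] (h k : ℕ) (hco : Nat.Coprime h k) (F : ℕ → M) :
    ∑ r ∈ range k, F (h * r % k) = ∑ r ∈ range k, F r := by
  rcases Nat.eq_zero_or_pos k with rfl | hk
  · simp
  have hinj : Set.InjOn (fun r => h * r % k) (range k) := by
    intro a ha b hb hab
    simp only [mem_coe, mem_range] at ha hb
    have : a ≡ b [MOD k] := Nat.ModEq.cancel_left_of_coprime (by simpa [Nat.coprime_comm] using hco) hab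
    simpa [Nat.ModEq, Nat.mod_eq_of_lt ha, Nat.mod_eq_of_lt hb] using this
  have himg : (range k).image (fun r => h * r % k) = range k := by
    apply Finset.eq_of_subset_of_card_le
    · intro x hx
      simp only [mem_image, mem_range] at hx ⊢
      obtain ⟨r, _, rfl⟩ := hx
      exact Nat.mod_lt _ hk
    · rw [Finset.card_image_of_injOn hinj]
  calc ∑ r ∈ range k, F (h * r % k) = ∑ x ∈ (range k).image (fun r => h * r % k), F x :=
        (Finset.sum_image (fun a ha b hb => hinj ha hb)).symm
    _ = ∑ r ∈ range k, F r := by rw [himg]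

lemma two_sum_range {R : Type*} [CommRing R] (n : ℕ) :
    2 * ∑ r ∈ range n, (r : R) = (n:R)^2 - n := by
  induction n with
  | zero => simp
  | succ n ih => rw [Finset.sum_range_succ, mul_add]; push_cast; linear_combination ih

lemma sawtooth_of_mem {x : ℝ} (h0 : 0 < x) (h1 : x < 1) : sawtooth x = x - 1/2 := by
  rw [sawtooth, if_neg, Int.fract_eq_self.mpr ⟨le_of_lt h0, h1⟩]
  rintro ⟨n, rfl⟩
  have a1 : (0:ℤ) < n := by exact_mod_cast h0
  have a2 : n < 1 := by exact_mod_cast h1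
  omega

lemma sawtooth_nat_add (n : ℕ) (x : ℝ) : sawtooth ((n:ℝ) + x) = sawtooth x := by
  have hiff : (∃ m:ℤ, (n:ℝ) + x = m) ↔ ∃ m:ℤ, x = m := by
    constructor
    · rintro ⟨m, hm⟩; exact ⟨m - n, by push_cast; linarith⟩
    · rintro ⟨m, hm⟩; exact ⟨m + n, by push_cast; linarith⟩
  have hfr : Int.fract ((n:ℝ) + x) = Int.fract x := by
    rw [show ((n:ℝ) + x) = ((n:ℤ):ℝ) + x by push_cast; ring, Int.fract_intCast_add]
  unfold sawtooth
  by_cases hc : ∃ m:ℤ, x = m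
  · rw [if_pos (hiff.mpr hc), if_pos hc]
  · rw [if_neg (fun hx => hc (hiff.mp hx)), if_neg hc, hfr]

lemma sawtooth_mul_div (h k r : ℕ) (hk : 0 < k) (hco : Nat.Coprime h k)
    (hr1 : 1 ≤ r) (hr2 : r < k) :
    sawtooth ((h:ℝ) * r / k) = ((h*r % k : ℕ):ℝ)/k - 1/2 := by
  have hkey : (h:ℝ) * r / k = ((h*r/k : ℕ):ℝ) + ((h*r % k : ℕ):ℝ)/k := by
    have hnat : (k * (h*r/k) + h*r % k : ℕ) = h*r := Nat.div_add_mod (h*r) k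
    have hc : (k:ℝ) * ((h*r/k : ℕ):ℝ) + ((h*r % k : ℕ):ℝ) = (h:ℝ) * (r:ℝ) := by
      exact_mod_cast hnat
    have hk' : (k:ℝ) ≠ 0 := by positivity
    field_simp
    linarith
  have hm0 : h*r % k ≠ 0 := by
    intro he
    have hd : k ∣ h * r := Nat.dvd_of_mod_eq_zero he
    have hd2 : k ∣ r := Nat.Coprime.dvd_of_dvd_mul_left (Nat.coprime_comm.mp hco) hd
    have := Nat.le_of_dvd (by omega) hd2
    omega
  have hmk : h*r % k < k := Nat.mod_lt _ hk
  rw [hkey, sawtooth_nat_add]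
  exact sawtooth_of_mem (by positivity)
    (by rw [div_lt_one (by positivity : (0:ℝ) < k)]; exact_mod_cast hmk)

lemma dedekind_eq (h k : ℕ) (hk : 0 < k) (hco : Nat.Coprime h k) :
    dedekindSum h k = ((∑ r ∈ range k, (r:ℤ) * (h*r % k : ℕ) : ℤ) : ℝ)/(k:ℝ)^2 - ((k:ℝ)-1)/4 := by
  have hk' : (k:ℝ) ≠ 0 := by positivity
  have hkpos : (0:ℝ) < k := by positivity
  set m : ℕ → ℕ := fun r => h*r % k with hm
  set S : ℤ := ∑ r ∈ range k, (r:ℤ) * (m r : ℕ) with hS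
  have hmod : ∑ r ∈ range k, ((m r : ℕ):ℝ) = ∑ r ∈ range k, (r:ℝ) :=
    sum_mod_eq h k hco (fun n => (n:ℝ))
  set P : ℕ → ℝ := fun r => (((m r):ℝ)/k - 1/2) * ((r:ℝ)/k - 1/2) with hP
  have hsz : sawtooth 0 = 0 := by rw [sawtooth, if_pos ⟨0, by norm_num⟩]
  have h0 : sawtooth ((h:ℝ) * (0:ℕ) / k) * sawtooth (((0:ℕ):ℝ)/k) = 0 := by
    have e1 : (h:ℝ) * ((0:ℕ):ℝ) / k = 0 := by norm_num
    have e2 : ((0:ℕ):ℝ)/k = 0 := by norm_num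
    rw [e1, e2, hsz, mul_zero]
  have h0' : P 0 = 1/4 := by
    have : m 0 = 0 := by simp [hm]
    rw [hP]; simp only [this]; norm_num
  have htail : ∑ r ∈ Ico 1 k, sawtooth ((h:ℝ) * r / k) * sawtooth ((r:ℝ)/k)
      = ∑ r ∈ Ico 1 k, P r := by
    refine Finset.sum_congr rfl (fun r hr => ?_)
    simp only [mem_Ico] at hr
    rw [hP, sawtooth_mul_div h k r hk hco hr.1 hr.2,
        sawtooth_of_mem (div_pos (by exact_mod_cast Nat.lt_of_lt_of_le Nat.zero_lt_one hr.1) hkpos)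
          (by rw [div_lt_one hkpos]; exact_mod_cast hr.2)]
  have split1 : dedekindSum h k = sawtooth ((h:ℝ) * (0:ℕ) / k) * sawtooth (((0:ℕ):ℝ)/k)
      + ∑ r ∈ Ico 1 k, sawtooth ((h:ℝ) * r / k) * sawtooth ((r:ℝ)/k) := by
    rw [dedekindSum, range_eq_Ico, Finset.sum_eq_sum_Ico_succ_bot hk]
  have split2 : ∑ r ∈ range k, P r = P 0 + ∑ r ∈ Ico 1 k, P r := by
    rw [range_eq_Ico, Finset.sum_eq_sum_Ico_succ_bot hk]
  have step1 : dedekindSum h k = ∑ r ∈ range k, P r - 1/4 := by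
    rw [split1, split2, h0, h0', htail]; ring
  rw [step1]
  have expand : ∀ r ∈ range k, P r
      = ((m r):ℝ)*(r:ℝ)/(k:ℝ)^2 - ((m r):ℝ)/(2*k) - (r:ℝ)/(2*k) + 1/4 := by
    intro r _
    rw [hP]
    field_simp
    ring
  rw [Finset.sum_congr rfl expand]
  rw [Finset.sum_add_distrib, Finset.sum_sub_distrib, Finset.sum_sub_distrib,
      ← Finset.sum_div, ← Finset.sum_div, ← Finset.sum_div, Finset.sum_const, Finset.card_range]
  have hcast : ∑ r ∈ range k, ((m r):ℝ)*(r:ℝ) = (S:ℝ) := by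
    rw [hS]
    push_cast
    exact Finset.sum_congr rfl (fun r _ => by ring)
  have hL : ∑ r ∈ range k, (r:ℝ) = ((k:ℝ)^2 - k)/2 := by
    have := two_sum_range (R := ℝ) k
    linarith
  rw [hcast, hmod, hL]
  field_simp
  ring

lemma six_sum_sq {R : Type*} [CommRing R] (n : ℕ) :
    6 * ∑ r ∈ range n, (r : R)^2 = 2*(n:R)^3 - 3*(n:R)^2 + n := by
  induction n with
  | zero => simp
  | succ n ih => rw [Finset.sum_range_succ, mul_add]; push_cast; linear_combination ih

lemma sum_odd_Ico (n : ℕ) (hn : 0 < n) : ∑ s ∈ Ico 1 n, (2*(s:ℤ) - 1) = ((n:ℤ) - 1)^2 := by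
  induction n, hn using Nat.le_induction with
  | base => simp
  | succ n hn ih =>
    rw [Finset.sum_Ico_succ_top (by omega)]
    push_cast; push_cast at ih; linarith [ih]

lemma sum_odd_Ico' (n : ℕ) : ∑ s ∈ Ico 1 (n+1), (2*(s:ℤ) - 1) = (n:ℤ)^2 := by
  induction n with
  | zero => simp
  | succ n ih =>
    rw [Finset.sum_Ico_succ_top (by omega)]
    push_cast; push_cast at ih; linarith [ih]

lemma sq_layer (m n : ℕ) (hm : m < n) :
    ((m:ℤ))^2 = ∑ s ∈ Ico 1 n, (if s ≤ m then 2*(s:ℤ) - 1 else 0) := by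
  rw [← Finset.sum_filter]
  have : (Ico 1 n).filter (· ≤ m) = Ico 1 (m+1) := by
    ext s; simp only [mem_filter, mem_Ico]; omega
  rw [this, sum_odd_Ico']

lemma count_lem (h k s : ℕ) (hh : 0 < h) (hk : 0 < k) (hco : Nat.Coprime h k) :
    (Ico 1 k).filter (fun r => s ≤ h * r / k) = Ico (k*s/h + 1) k := by
  ext r
  simp only [mem_filter, mem_Ico]
  constructor
  · rintro ⟨⟨hr1, hr2⟩, hle⟩
    refine ⟨?_, hr2⟩
    rw [Nat.le_div_iff_mul_le hk] at hle
    have hne : s * k ≠ h * r := by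
      intro he
      have hd : k ∣ h * r := ⟨s, by rw [← he]; ring⟩
      have hd2 : k ∣ r := Nat.Coprime.dvd_of_dvd_mul_left (Nat.coprime_comm.mp hco) hd
      have := Nat.le_of_dvd (by omega) hd2
      omega
    have hlt : k * s < r * h := by
      have : s * k < h * r := lt_of_le_of_ne hle hne
      linarith [this]
    have := (Nat.div_lt_iff_lt_mul hh).mpr hlt
    omega
  · rintro ⟨hr1, hr2⟩
    have hgr : k * s / h < r := by omega
    have hlt : k * s < r * h := (Nat.div_lt_iff_lt_mul hh).mp hgr
    have h1 : 1 ≤ r := by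
      by_contra hc
      push_neg at hc
      interval_cases r
      simp at hlt
    refine ⟨⟨h1, hr2⟩, ?_⟩
    rw [Nat.le_div_iff_mul_le hk]
    nlinarith [hlt]

lemma reciprocity (h k : ℕ) (hh : 0 < h) (hk : 0 < k) (hco : Nat.Coprime h k) :
    dedekindSum h k + dedekindSum k h
      = 1/12 * ((h:ℝ)/k + 1/((h:ℝ)*k) + (k:ℝ)/h) - 1/4 := by
  classical
  set f : ℕ → ℕ := fun r => h*r/k with hf
  set g : ℕ → ℕ := fun s => k*s/h with hg
  set Qk : ℤ := ∑ r ∈ range k, (r:ℤ)^2 with hQkd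
  set Qh : ℤ := ∑ s ∈ range h, (s:ℤ)^2 with hQhd
  set U : ℤ := ∑ r ∈ range k, (r:ℤ)*(f r) with hUd
  set V : ℤ := ∑ s ∈ range h, (s:ℤ)*(g s) with hVd
  set Fs : ℤ := ∑ r ∈ range k, ((f r : ℕ):ℤ)^2 with hFd
  set Sg : ℤ := ∑ s ∈ range h, ((g s : ℕ):ℤ) with hSgd
  set Lh : ℤ := ∑ s ∈ range h, (s:ℤ) with hLhd
  set S1 : ℤ := ∑ r ∈ range k, (r:ℤ)*(h*r % k : ℕ) with hS1d
  set S2 : ℤ := ∑ s ∈ range h, (s:ℤ)*(k*s % h : ℕ) with hS2d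
  -- division identities
  have dv : ∀ r : ℕ, (k:ℤ) * (f r) + ((h*r % k : ℕ):ℤ) = (h:ℤ)*r := by
    intro r
    exact_mod_cast Nat.div_add_mod (h*r) k
  have dvh : ∀ s : ℕ, (h:ℤ) * (g s) + ((k*s % h : ℕ):ℤ) = (k:ℤ)*s := by
    intro s
    exact_mod_cast Nat.div_add_mod (k*s) h
  -- sum of m^2 and m
  have hmod2 : ∑ r ∈ range k, ((h*r % k : ℕ):ℤ)^2 = Qk := by
    rw [hQkd]; exact sum_mod_eq h k hco (fun n : ℕ => (n:ℤ)^2)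
  have hmodh : ∑ s ∈ range h, ((k*s % h : ℕ):ℤ) = Lh := by
    rw [hLhd]; exact sum_mod_eq k h hco.symm (fun n : ℕ => (n:ℤ))
  -- E1
  have hE1 : (h:ℤ)^2*Qk + (k:ℤ)^2*Fs = Qk + 2*h*k*U := by
    have key : ∀ r ∈ range k, (h:ℤ)^2*(r:ℤ)^2 + (k:ℤ)^2*((f r : ℕ):ℤ)^2
        = ((h*r % k : ℕ):ℤ)^2 + 2*(h:ℤ)*(k:ℤ)*((r:ℤ)*(f r)) := by
      intro r _
      linear_combination ((k:ℤ)*(f r) - (h:ℤ)*r - ((h*r % k : ℕ):ℤ)) * (dv r)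
    have hsum := Finset.sum_congr rfl key
    rw [Finset.sum_add_distrib, Finset.sum_add_distrib, ← Finset.mul_sum, ← Finset.mul_sum,
        ← Finset.mul_sum] at hsum
    rw [hQkd, hFd, hUd]
    rw [hmod2] at hsum
    convert hsum using 2 <;> ring
  -- S1
  have hS1 : S1 = h*Qk - k*U := by
    have key : ∀ r ∈ range k, (r:ℤ)*((h*r % k : ℕ):ℤ)
        = (h:ℤ)*(r:ℤ)^2 - (k:ℤ)*((r:ℤ)*(f r)) := by
      intro r _
      linear_combination (r:ℤ) * (dv r)
    have hsum := Finset.sum_congr rfl key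
    rw [Finset.sum_sub_distrib, ← Finset.mul_sum, ← Finset.mul_sum] at hsum
    rw [hS1d, hQkd, hUd]
    exact hsum
  have hS2 : S2 = k*Qh - h*V := by
    have key : ∀ s ∈ range h, (s:ℤ)*((k*s % h : ℕ):ℤ)
        = (k:ℤ)*(s:ℤ)^2 - (h:ℤ)*((s:ℤ)*(g s)) := by
      intro s _
      linear_combination (s:ℤ) * (dvh s)
    have hsum := Finset.sum_congr rfl key
    rw [Finset.sum_sub_distrib, ← Finset.mul_sum, ← Finset.mul_sum] at hsum
    rw [hS2d, hQhd, hVd]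
    exact hsum
  -- Sg relation
  have hSg2 : (k:ℤ)*Lh = h*Sg + Lh := by
    have key : ∀ s ∈ range h, (k:ℤ)*(s:ℤ)
        = (h:ℤ)*((g s : ℕ):ℤ) + ((k*s % h : ℕ):ℤ) := fun s _ => (dvh s).symm
    have hsum := Finset.sum_congr rfl key
    rw [Finset.sum_add_distrib, ← Finset.mul_sum, ← Finset.mul_sum, hmodh] at hsum
    rw [hLhd, hSgd]
    exact hsum
  have hLh : 2*Lh = (h:ℤ)^2 - h := by
    rw [hLhd]; exact two_sum_range h
  have hQk : 6*Qk = 2*(k:ℤ)^3 - 3*(k:ℤ)^2 + k := by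
    rw [hQkd]; exact six_sum_sq k
  have hQh : 6*Qh = 2*(h:ℤ)^3 - 3*(h:ℤ)^2 + h := by
    rw [hQhd]; exact six_sum_sq h
  -- E2 via layer cake
  have hE2 : Fs = ((k:ℤ)-1)*((h:ℤ)-1)^2 - 2*V + Sg := by
    have hf0 : f 0 = 0 := by simp [hf]
    have hstep : Fs = ∑ r ∈ Ico 1 k, ((f r : ℕ):ℤ)^2 := by
      rw [hFd, range_eq_Ico, Finset.sum_eq_sum_Ico_succ_bot hk, hf0]
      norm_num
    have hflt : ∀ r ∈ Ico 1 k, f r < h := by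
      intro r hr
      simp only [mem_Ico] at hr
      rw [hf]
      exact (Nat.div_lt_iff_lt_mul hk).mpr ((Nat.mul_lt_mul_left hh).mpr hr.2)
    have hlayer : ∀ r ∈ Ico 1 k, ((f r : ℕ):ℤ)^2
        = ∑ s ∈ Ico 1 h, (if s ≤ f r then 2*(s:ℤ) - 1 else 0) := by
      intro r hr
      exact sq_layer (f r) h (hflt r hr)
    rw [hstep, Finset.sum_congr rfl hlayer, Finset.sum_comm]
    have hinner : ∀ s ∈ Ico 1 h,
        ∑ r ∈ Ico 1 k, (if s ≤ f r then 2*(s:ℤ) - 1 else 0)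
          = ((k:ℤ) - 1 - (g s)) * (2*(s:ℤ) - 1) := by
      intro s hs
      simp only [mem_Ico] at hs
      rw [← Finset.sum_filter]
      have hfilter : (Ico 1 k).filter (fun r => s ≤ f r) = Ico (g s + 1) k := by
        rw [hf, hg]; exact count_lem h k s hh hk hco
      rw [hfilter, Finset.sum_const, Nat.card_Ico, nsmul_eq_mul]
      have hgk : g s < k := by
        rw [hg]
        exact (Nat.div_lt_iff_lt_mul hh).mpr ((Nat.mul_lt_mul_left hk).mpr hs.2)
      have : ((k - (g s + 1) : ℕ):ℤ) = (k:ℤ) - 1 - (g s) := by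
        have : g s + 1 ≤ k := hgk
        push_cast [Nat.cast_sub this]
        ring
      rw [this]
    rw [Finset.sum_congr rfl hinner]
    have expand : ∀ s ∈ Ico 1 h, ((k:ℤ) - 1 - (g s)) * (2*(s:ℤ) - 1)
        = ((k:ℤ)-1)*(2*(s:ℤ)-1) - 2*((s:ℤ)*(g s)) + (g s) := by
      intro s _; ring
    rw [Finset.sum_congr rfl expand, Finset.sum_add_distrib, Finset.sum_sub_distrib,
        ← Finset.mul_sum, ← Finset.mul_sum, sum_odd_Ico h hh]
    have hV' : ∑ s ∈ Ico 1 h, (s:ℤ)*(g s) = V := by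
      rw [hVd, range_eq_Ico, Finset.sum_eq_sum_Ico_succ_bot hh]
      simp
    have hSg' : ∑ s ∈ Ico 1 h, ((g s : ℕ):ℤ) = Sg := by
      rw [hSgd, range_eq_Ico, Finset.sum_eq_sum_Ico_succ_bot hh]
      simp [hg]
    rw [hV', hSg']
  -- the integer identity
  have T : 12*(h:ℤ)^2*S1 + 12*(k:ℤ)^2*S2
      = 3*(h:ℤ)^3*(k:ℤ)^2 + 3*(h:ℤ)^2*(k:ℤ)^3 - 9*(h:ℤ)^2*(k:ℤ)^2
        + (h:ℤ)^3*(k:ℤ) + (h:ℤ)*(k:ℤ)^3 + (h:ℤ)*(k:ℤ) := by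
    linear_combination 12*(h:ℤ)^2*hS1 + 12*(k:ℤ)^2*hS2 + 6*(h:ℤ)*hE1 - 6*(h:ℤ)*(k:ℤ)^2*hE2
      + 6*(k:ℤ)^2*hSg2 - 3*(k:ℤ)^2*((k:ℤ)-1)*hLh + ((h:ℤ)^3+(h:ℤ))*hQk + 2*(k:ℤ)^3*hQh
  -- pass to ℝ
  rw [dedekind_eq h k hk hco, dedekind_eq k h hh hco.symm]
  have hS1r : (12:ℝ)*(h:ℝ)^2*((S1:ℤ):ℝ) + 12*(k:ℝ)^2*((S2:ℤ):ℝ)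
      = 3*(h:ℝ)^3*(k:ℝ)^2 + 3*(h:ℝ)^2*(k:ℝ)^3 - 9*(h:ℝ)^2*(k:ℝ)^2
        + (h:ℝ)^3*(k:ℝ) + (h:ℝ)*(k:ℝ)^3 + (h:ℝ)*(k:ℝ) := by
    exact_mod_cast congrArg (fun z : ℤ => (z:ℝ)) T
  have hkr : (k:ℝ) ≠ 0 := by positivity
  have hhr : (h:ℝ) ≠ 0 := by positivity
  rw [hS1d, hS2d] at hS1r
  set a : ℝ := ((∑ r ∈ range k, (r:ℤ) * (h*r % k : ℕ) : ℤ):ℝ) with ha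
  set b : ℝ := ((∑ s ∈ range h, (s:ℤ) * (k*s % h : ℕ) : ℤ):ℝ) with hb
  field_simp
  linear_combination 4 * hS1r

lemma edge_count (h t : ℕ) (hh : 0 < h) (ht : 0 < t) :
    (Set.ncard {x : ℤ | 0 < (x : ℝ) ∧ (x : ℝ) < (h : ℝ) * t} : ℝ) = (h:ℝ)*t - 1 := by
  have hset : {x : ℤ | 0 < (x : ℝ) ∧ (x : ℝ) < (h : ℝ) * t} = ↑(Finset.Ioo (0:ℤ) ((h*t : ℕ):ℤ)) := by
    ext x
    simp only [Set.mem_setOf_eq, coe_Ioo, Set.mem_Ioo]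
    constructor
    · rintro ⟨h1, h2⟩
      refine ⟨by exact_mod_cast h1, by exact_mod_cast (by push_cast; exact h2 : (x:ℝ) < ((h*t:ℕ):ℝ))⟩
    · rintro ⟨h1, h2⟩
      have h2' : (x:ℝ) < ((h*t:ℕ):ℝ) := by exact_mod_cast h2
      exact ⟨by exact_mod_cast h1, by push_cast at h2' ⊢; linarith⟩
  rw [hset, Set.ncard_coe_finset, Int.card_Ioo]
  have h1 : 1 ≤ h*t := Nat.one_le_iff_ne_zero.mpr (by positivity)
  have : ((h*t:ℕ):ℤ) - 0 - 1 = ((h*t - 1 : ℕ):ℤ) := by omega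
  rw [this, Int.toNat_natCast]
  push_cast [Nat.cast_sub h1]
  ring

section counting
variable (h k t : ℕ)

lemma hyp_count (hh : 0 < h) (hk : 0 < k) (hco : Nat.Coprime h k) (ht : 0 < t) :
    ((Finset.Ioo (0:ℤ) ((h*t:ℕ):ℤ) ×ˢ Finset.Ioo (0:ℤ) ((k*t:ℕ):ℤ)).filter
      (fun p => (k:ℤ)*p.1 + (h:ℤ)*p.2 = (h:ℤ)*k*t)).card = t - 1 := by
  have hh' : (0:ℤ) < h := by exact_mod_cast hh
  have hk' : (0:ℤ) < k := by exact_mod_cast hk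
  have himg : (Finset.Ioo (0:ℤ) ((h*t:ℕ):ℤ) ×ˢ Finset.Ioo (0:ℤ) ((k*t:ℕ):ℤ)).filter
      (fun p => (k:ℤ)*p.1 + (h:ℤ)*p.2 = (h:ℤ)*k*t)
      = (Finset.Ioo (0:ℤ) (t:ℤ)).image (fun s => ((h:ℤ)*s, (k:ℤ)*((t:ℤ)-s))) := by
    ext p
    simp only [mem_filter, mem_product, mem_Ioo, mem_image]
    constructor
    · rintro ⟨⟨⟨hx0, hxn⟩, ⟨hy0, hym⟩⟩, heq⟩
      have hco' : IsCoprime (h:ℤ) (k:ℤ) := by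
        rw [Nat.isCoprime_iff_coprime]; exact hco
      have hdvd : (h:ℤ) ∣ (k:ℤ) * p.1 := ⟨(k:ℤ)*t - p.2, by linarith [heq]⟩
      obtain ⟨s, hs⟩ := hco'.dvd_of_dvd_mul_left hdvd
      have hs0 : 0 < s := by nlinarith [hs ▸ hx0]
      have hst : s < t := by
        have : (h:ℤ)*s < (h:ℤ)*t := by
          have hxn' : p.1 < (h:ℤ)*t := by push_cast at hxn; linarith
          rw [← hs]; exact hxn'
        exact lt_of_mul_lt_mul_left this (le_of_lt hh')
      refine ⟨s, ⟨hs0, hst⟩, ?_⟩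
      have hy : p.2 = (k:ℤ)*((t:ℤ)-s) := by
        have : (h:ℤ) * p.2 = (h:ℤ) * ((k:ℤ)*((t:ℤ)-s)) := by
          rw [hs] at heq; ring_nf; ring_nf at heq; linarith
        exact mul_left_cancel₀ (ne_of_gt hh') this
      rw [Prod.ext_iff]
      exact ⟨by rw [hs], by rw [hy]⟩
    · rintro ⟨s, ⟨hs0, hst⟩, rfl⟩
      refine ⟨⟨⟨?_, ?_⟩, ⟨?_, ?_⟩⟩, ?_⟩
      · show (0:ℤ) < (h:ℤ)*s
        exact mul_pos hh' hs0
      · show (h:ℤ)*s < ((h*t:ℕ):ℤ)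
        push_cast; nlinarith
      · show (0:ℤ) < (k:ℤ)*((t:ℤ)-s)
        exact mul_pos hk' (sub_pos.mpr hst)
      · show (k:ℤ)*((t:ℤ)-s) < ((k*t:ℕ):ℤ)
        push_cast; nlinarith
      · show (k:ℤ)*((h:ℤ)*s) + (h:ℤ)*((k:ℤ)*((t:ℤ)-s)) = (h:ℤ)*k*t
        ring
  rw [himg, Finset.card_image_of_injOn, Int.card_Ioo]
  · omega
  · intro a _ b _ hab
    have := congrArg Prod.fst hab
    simp only at this
    exact mul_left_cancel₀ (ne_of_gt hh') this

end counting


section counting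
variable (h k t : ℕ)

-- abbreviations inside one big lemma
lemma interior_double_count (hh : 0 < h) (hk : 0 < k) (ht : 0 < t) :
    2 * ((Finset.Ioo (0:ℤ) ((h*t:ℕ):ℤ) ×ˢ Finset.Ioo (0:ℤ) ((k*t:ℕ):ℤ)).filter
      (fun p => (k:ℤ)*p.1 + (h:ℤ)*p.2 < (h:ℤ)*k*t)).card
    + ((Finset.Ioo (0:ℤ) ((h*t:ℕ):ℤ) ×ˢ Finset.Ioo (0:ℤ) ((k*t:ℕ):ℤ)).filter
      (fun p => (k:ℤ)*p.1 + (h:ℤ)*p.2 = (h:ℤ)*k*t)).card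
    = (h*t - 1) * (k*t - 1) := by
  classical
  have hh' : (0:ℤ) < h := by exact_mod_cast hh
  have hk' : (0:ℤ) < k := by exact_mod_cast hk
  set n : ℤ := ((h*t:ℕ):ℤ) with hn
  set m : ℤ := ((k*t:ℕ):ℤ) with hm
  set N : ℤ := (h:ℤ)*k*t with hN
  set R : Finset (ℤ×ℤ) := Finset.Ioo (0:ℤ) n ×ˢ Finset.Ioo (0:ℤ) m with hR
  have hsum2 : (k:ℤ)*n + (h:ℤ)*m = 2*N := by rw [hn, hm, hN]; push_cast; ring
  -- involution
  have hbij : (R.filter (fun p => (k:ℤ)*p.1 + (h:ℤ)*p.2 < N)).card = (R.filter (fun p => N < (k:ℤ)*p.1 + (h:ℤ)*p.2)).card := by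
    apply Finset.card_nbij' (fun p => (n - p.1, m - p.2)) (fun p => (n - p.1, m - p.2))
    · intro p hp
      simp only [hR, mem_coe, mem_filter, mem_product, mem_Ioo] at hp ⊢
      obtain ⟨⟨⟨h1, h2⟩, ⟨h3, h4⟩⟩, h5⟩ := hp
      refine ⟨⟨⟨by omega, by omega⟩, ⟨by omega, by omega⟩⟩, ?_⟩
      show N < (k:ℤ)*(n - p.1) + (h:ℤ)*(m - p.2)
      have : (k:ℤ)*(n - p.1) + (h:ℤ)*(m - p.2) = 2*N - ((k:ℤ)*p.1 + (h:ℤ)*p.2) := by ring_nf; linarith [hsum2]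
      rw [this]
      linarith
    · intro p hp
      simp only [hR, mem_coe, mem_filter, mem_product, mem_Ioo] at hp ⊢
      obtain ⟨⟨⟨h1, h2⟩, ⟨h3, h4⟩⟩, h5⟩ := hp
      refine ⟨⟨⟨by omega, by omega⟩, ⟨by omega, by omega⟩⟩, ?_⟩
      show (k:ℤ)*(n - p.1) + (h:ℤ)*(m - p.2) < N
      have : (k:ℤ)*(n - p.1) + (h:ℤ)*(m - p.2) = 2*N - ((k:ℤ)*p.1 + (h:ℤ)*p.2) := by ring_nf; linarith [hsum2]
      rw [this]
      linarith
    · intro p _; simp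
    · intro p _; simp
  -- partition
  have hpart : (R.filter (fun p => (k:ℤ)*p.1 + (h:ℤ)*p.2 < N)).card + (R.filter (fun p => N < (k:ℤ)*p.1 + (h:ℤ)*p.2)).card
      + (R.filter (fun p => (k:ℤ)*p.1 + (h:ℤ)*p.2 = N)).card = R.card := by
    have h1 : (R.filter (fun p => (k:ℤ)*p.1 + (h:ℤ)*p.2 < N)).card + (R.filter (fun p => ¬ ((k:ℤ)*p.1 + (h:ℤ)*p.2 < N))).card = R.card :=
      Finset.card_filter_add_card_filter_not _
    have h2 : R.filter (fun p => ¬ ((k:ℤ)*p.1 + (h:ℤ)*p.2 < N)) = R.filter (fun p => N ≤ (k:ℤ)*p.1 + (h:ℤ)*p.2) := by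
      apply Finset.filter_congr; intro p _; simp [not_lt]
    have h3 : ((R.filter (fun p => N ≤ (k:ℤ)*p.1 + (h:ℤ)*p.2)).filter (fun p => N < (k:ℤ)*p.1 + (h:ℤ)*p.2)).card
        + ((R.filter (fun p => N ≤ (k:ℤ)*p.1 + (h:ℤ)*p.2)).filter (fun p => ¬ (N < (k:ℤ)*p.1 + (h:ℤ)*p.2))).card
        = (R.filter (fun p => N ≤ (k:ℤ)*p.1 + (h:ℤ)*p.2)).card :=
      Finset.card_filter_add_card_filter_not _
    have h4 : (R.filter (fun p => N ≤ (k:ℤ)*p.1 + (h:ℤ)*p.2)).filter (fun p => N < (k:ℤ)*p.1 + (h:ℤ)*p.2) = R.filter (fun p => N < (k:ℤ)*p.1 + (h:ℤ)*p.2) := by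
      rw [Finset.filter_filter]
      apply Finset.filter_congr; intro p _
      constructor
      · rintro ⟨_, hb⟩; exact hb
      · intro hb; exact ⟨le_of_lt hb, hb⟩
    have h5 : (R.filter (fun p => N ≤ (k:ℤ)*p.1 + (h:ℤ)*p.2)).filter (fun p => ¬ (N < (k:ℤ)*p.1 + (h:ℤ)*p.2)) = R.filter (fun p => (k:ℤ)*p.1 + (h:ℤ)*p.2 = N) := by
      rw [Finset.filter_filter]
      apply Finset.filter_congr; intro p _
      constructor
      · rintro ⟨ha, hb⟩; exact le_antisymm (not_lt.mp hb) ha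
      · intro hb; rw [hb]; exact ⟨le_refl _, lt_irrefl _⟩
    rw [h2] at h1
    rw [h4, h5] at h3
    omega
  have hcardR : R.card = (h*t - 1) * (k*t - 1) := by
    rw [hR, Finset.card_product, Int.card_Ioo, Int.card_Ioo, hn, hm]
    have e1 : ((h*t:ℕ):ℤ) - 0 - 1 = ((h*t - 1:ℕ):ℤ) := by
      have : 0 < h*t := Nat.mul_pos hh ht
      omega
    have e2 : ((k*t:ℕ):ℤ) - 0 - 1 = ((k*t - 1:ℕ):ℤ) := by
      have : 0 < k*t := Nat.mul_pos hk ht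
      omega
    rw [e1, e2, Int.toNat_natCast, Int.toNat_natCast]
  omega

end counting

section setconv
variable (h k t : ℕ)

lemma interior_set_eq (hh : 0 < h) (hk : 0 < k) :
    {p : ℤ × ℤ | 0 < p.1 ∧ 0 < p.2 ∧ (k:ℝ) * p.1 + (h:ℝ) * p.2 < (h:ℝ) * k * (t:ℝ)}
    = ↑((Finset.Ioo (0:ℤ) ((h*t:ℕ):ℤ) ×ˢ Finset.Ioo (0:ℤ) ((k*t:ℕ):ℤ)).filter
      (fun p => (k:ℤ)*p.1 + (h:ℤ)*p.2 < (h:ℤ)*k*t)) := by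
  have hh' : (0:ℤ) < h := by exact_mod_cast hh
  have hk' : (0:ℤ) < k := by exact_mod_cast hk
  ext p
  simp only [Set.mem_setOf_eq, coe_filter, mem_product, mem_Ioo, Set.mem_setOf_eq]
  constructor
  · rintro ⟨h1, h2, h3⟩
    have h3' : (k:ℤ)*p.1 + (h:ℤ)*p.2 < (h:ℤ)*k*t := by exact_mod_cast h3
    have hxb : p.1 < ((h*t:ℕ):ℤ) := by
      have hx : (k:ℤ)*p.1 < (k:ℤ)*((h:ℤ)*t) := by nlinarith
      have := lt_of_mul_lt_mul_left hx (le_of_lt hk')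
      push_cast
      linarith
    have hyb : p.2 < ((k*t:ℕ):ℤ) := by
      have hy : (h:ℤ)*p.2 < (h:ℤ)*((k:ℤ)*t) := by nlinarith
      have := lt_of_mul_lt_mul_left hy (le_of_lt hh')
      push_cast
      linarith
    exact ⟨⟨⟨h1, hxb⟩, ⟨h2, hyb⟩⟩, h3'⟩
  · rintro ⟨⟨⟨h1, _⟩, ⟨h2, _⟩⟩, h3⟩
    exact ⟨h1, h2, by exact_mod_cast h3⟩

lemma hyp_set_eq (hh : 0 < h) (hk : 0 < k) :
    {p : ℤ × ℤ | 0 < p.1 ∧ 0 < p.2 ∧ (k:ℝ) * p.1 + (h:ℝ) * p.2 = (h:ℝ) * k * (t:ℝ)}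
    = ↑((Finset.Ioo (0:ℤ) ((h*t:ℕ):ℤ) ×ˢ Finset.Ioo (0:ℤ) ((k*t:ℕ):ℤ)).filter
      (fun p => (k:ℤ)*p.1 + (h:ℤ)*p.2 = (h:ℤ)*k*t)) := by
  have hh' : (0:ℤ) < h := by exact_mod_cast hh
  have hk' : (0:ℤ) < k := by exact_mod_cast hk
  ext p
  simp only [Set.mem_setOf_eq, coe_filter, mem_product, mem_Ioo, Set.mem_setOf_eq]
  constructor
  · rintro ⟨h1, h2, h3⟩
    have h3' : (k:ℤ)*p.1 + (h:ℤ)*p.2 = (h:ℤ)*k*t := by exact_mod_cast h3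
    have hxb : p.1 < ((h*t:ℕ):ℤ) := by
      have hx : (k:ℤ)*p.1 < (k:ℤ)*((h:ℤ)*t) := by nlinarith
      have := lt_of_mul_lt_mul_left hx (le_of_lt hk')
      push_cast
      linarith
    have hyb : p.2 < ((k*t:ℕ):ℤ) := by
      have hy : (h:ℤ)*p.2 < (h:ℤ)*((k:ℤ)*t) := by nlinarith
      have := lt_of_mul_lt_mul_left hy (le_of_lt hh')
      push_cast
      linarith
    exact ⟨⟨⟨h1, hxb⟩, ⟨h2, hyb⟩⟩, h3'⟩
  · rintro ⟨⟨⟨h1, _⟩, ⟨h2, _⟩⟩, h3⟩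
    exact ⟨h1, h2, by exact_mod_cast h3⟩

end setconv

lemma solidAngleSum_eval (h k : ℕ) (hh : 0 < h) (hk : 0 < k)
    (hco : Nat.Coprime h k) (t : ℕ) (ht : 0 < t) :
    solidAngleSum h k (t : ℝ) = (h:ℝ)*k/2*(t:ℝ)^2 := by
  have hh' : (0:ℝ) < h := by exact_mod_cast hh
  have hk' : (0:ℝ) < k := by exact_mod_cast hk
  rw [solidAngleSum]
  -- indicators
  have hi1 : intIndicator ((h:ℝ) * (t:ℝ)) = 1 := by
    rw [intIndicator, if_pos ⟨((h*t:ℕ):ℤ), by push_cast; ring⟩]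
  have hi2 : intIndicator ((k:ℝ) * (t:ℝ)) = 1 := by
    rw [intIndicator, if_pos ⟨((k*t:ℕ):ℤ), by push_cast; ring⟩]
  -- arctan
  have harc : Real.arctan ((h:ℝ)/k) = π/2 - Real.arctan ((k:ℝ)/h) := by
    rw [show (h:ℝ)/k = ((k:ℝ)/h)⁻¹ by rw [inv_div], Real.arctan_inv_of_pos (div_pos hk' hh')]
  -- counts
  rw [interior_set_eq h k t hh hk, hyp_set_eq h k t hh hk,
      Set.ncard_coe_finset, Set.ncard_coe_finset,
      edge_count h t hh ht, edge_count k t hk ht]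
  have hhyp := hyp_count h k t hh hk hco ht
  have hdouble := interior_double_count h k t hh hk ht
  rw [hhyp] at hdouble ⊢
  -- cast the double count to ℝ
  have h1 : 1 ≤ h*t := Nat.mul_pos hh ht
  have h2 : 1 ≤ k*t := Nat.mul_pos hk ht
  set c : ℕ := ((Finset.Ioo (0:ℤ) ((h*t:ℕ):ℤ) ×ˢ Finset.Ioo (0:ℤ) ((k*t:ℕ):ℤ)).filter
      (fun p => (k:ℤ)*p.1 + (h:ℤ)*p.2 < (h:ℤ)*k*t)).card with hc
  have hdr : 2 * (c : ℝ) + ((t:ℝ) - 1) = ((h:ℝ)*t - 1) * ((k:ℝ)*t - 1) := by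
    have h3 := congrArg (fun n : ℕ => (n:ℝ)) hdouble
    push_cast [Nat.cast_sub h1, Nat.cast_sub h2, Nat.cast_sub ht] at h3
    linarith
  have hcast : ((t - 1 : ℕ):ℝ) = (t:ℝ) - 1 := by
    push_cast [Nat.cast_sub ht]
    ring
  rw [hcast, hi1, hi2, harc]
  have harcsum : Real.arctan ((k:ℝ)/h)/(2*π) + (π/2 - Real.arctan ((k:ℝ)/h))/(2*π) = 1/4 := by
    have hpi : π ≠ 0 := Real.pi_ne_zero
    field_simp
    ring
  linear_combination hdr/2 + harcsum

/-- For integer dilations `t`, the solid-angle sum of the right triangle with legs `h, k`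
is `(hk/2)t² + (1/12)(h/k + 1/(hk) + k/h) − 1/4 − s(h,k) − s(k,h)`. -/
theorem solidAngleSum_int_dilation (h k : ℕ) (hh : 0 < h) (hk : 0 < k)
    (hco : Nat.Coprime h k) (t : ℕ) (ht : 0 < t) :
    solidAngleSum h k (t : ℝ) =
      (h : ℝ) * k / 2 * (t : ℝ) ^ 2
      + 1/12 * ((h : ℝ)/k + 1/((h : ℝ)*k) + (k : ℝ)/h) - 1/4
      - dedekindSum h k - dedekindSum k h := by
  rw [solidAngleSum_eval h k hh hk hco t ht]
  have hrec := reciprocity h k hh hk hco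
  linarith
end

section
/- For any coprime positive integers h and k, the Dedekind sums satisfy the reciprocity law s(h,k) + s(k,h) = (1/12)·(h/k + 1/(hk) + k/h) − 1/4. -/
open Real

namespace DedekindRecipAux

open Finset

private lemma dr_sum_id (n : ℕ) : 2 * ∑ i ∈ range n, (i:ℤ) = n*(n-1) := by
  induction n with
  | zero => simp
  | succ m ih => rw [Finset.sum_range_succ]; push_cast; push_cast at ih; ring_nf; ring_nf at ih; linarith

private lemma dr_sum_sq (n : ℕ) : 6 * ∑ i ∈ range n, (i:ℤ)^2 = n*(n-1)*(2*n-1) := by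
  induction n with
  | zero => simp
  | succ m ih => rw [Finset.sum_range_succ]; push_cast; push_cast at ih; ring_nf; ring_nf at ih; linarith

/-- multiplication by `h` permutes residues mod `k` -/
private lemma dr_perm {M : Type*} [AddCommMonoid M] (h k : ℕ) (hco : Nat.Coprime h k)
    (f : ℕ → M) : ∑ r ∈ range k, f (h * r % k) = ∑ r ∈ range k, f r := by
  rcases Nat.lt_or_ge k 2 with hk2 | hk2
  · interval_cases k
    · simp
    · simp
  obtain ⟨g, -, hg⟩ := Nat.exists_mul_mod_eq_one_of_coprime hco hk2
  have hk0 : 0 < k := by omega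
  have cancel : ∀ a b : ℕ, a * b % k = 1 → ∀ r < k, b * (a * r % k) % k = r := by
    intro a b hab r hr
    have h1 : a * b ≡ 1 [MOD k] := by unfold Nat.ModEq; rw [hab, Nat.mod_eq_of_lt hk2]
    have h2 : b * (a * r % k) ≡ b * (a * r) [MOD k] :=
      Nat.ModEq.mul_left b (Nat.mod_modEq _ _)
    have h3 : b * (a * r) = (a * b) * r := by ring
    have h4 : (a * b) * r ≡ 1 * r [MOD k] := Nat.ModEq.mul_right r h1
    have h5 : b * (a * r % k) ≡ r [MOD k] := by
      rw [h3] at h2; simpa using h2.trans h4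
    unfold Nat.ModEq at h5
    rwa [Nat.mod_eq_of_lt hr] at h5
  refine Finset.sum_nbij' (fun r => h * r % k) (fun s => g * s % k) ?_ ?_ ?_ ?_ ?_
  · intro a ha; exact Finset.mem_range.mpr (Nat.mod_lt _ hk0)
  · intro a ha; exact Finset.mem_range.mpr (Nat.mod_lt _ hk0)
  · intro a ha; exact cancel h g hg a (Finset.mem_range.mp ha)
  · intro a ha
    have hg' : g * h % k = 1 := by rwa [Nat.mul_comm] at hg
    exact cancel g h hg' a (Finset.mem_range.mp ha)
  · intro a ha; rfl

private lemma dr_filt1 (h k : ℕ) (hh : 0 < h) (ν : ℕ) :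
    ((range k).filter (fun μ => k * ν < h * μ)).card = k - (k * ν / h + 1) := by
  have hset : (range k).filter (fun μ => k * ν < h * μ) = Finset.Ico (k * ν / h + 1) k := by
    ext μ
    simp only [Finset.mem_filter, Finset.mem_range, Finset.mem_Ico, Nat.add_one_le_iff]
    rw [Nat.div_lt_iff_lt_mul hh, mul_comm μ h]
    tauto
  rw [hset, Nat.card_Ico]

private lemma dr_mod_ne (h k μ : ℕ) (hco : Nat.Coprime h k) (h1 : 1 ≤ μ) (h2 : μ < k) :
    h * μ % k ≠ 0 := by
  intro h0
  have hdvd : k ∣ h * μ := Nat.dvd_of_mod_eq_zero h0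
  have : k ∣ μ := Nat.Coprime.dvd_of_dvd_mul_left hco.symm hdvd
  have := Nat.le_of_dvd (by omega) this
  omega

private lemma dr_filt2 (h k : ℕ) (hh : 0 < h) (hk : 0 < k) (hco : Nat.Coprime h k)
    (μ : ℕ) (hμ1 : 1 ≤ μ) (hμ : μ < k) :
    (range h).filter (fun ν => k * ν < h * μ) = range (h * μ / k + 1) := by
  have hmod : h * μ % k ≠ 0 := dr_mod_ne h k μ hco hμ1 hμ
  ext ν
  simp only [Finset.mem_filter, Finset.mem_range, Nat.lt_succ_iff]
  constructor
  · rintro ⟨hνh, hlt⟩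
    exact (Nat.le_div_iff_mul_le hk).mpr (by rw [mul_comm]; omega)
  · intro hν'
    have hle : k * ν ≤ h * μ := by
      rw [mul_comm]; exact (Nat.le_div_iff_mul_le hk).mp hν'
    have hne : k * ν ≠ h * μ := by
      intro he
      exact hmod (by rw [← he]; exact Nat.mul_mod_right k ν)
    have hq : h * μ / k < h := (Nat.div_lt_iff_lt_mul hk).mpr (by nlinarith)
    exact ⟨by omega, by omega⟩

private lemma dr_dm (h k : ℕ) (μ : ℕ) :
    (k:ℤ) * ((h*μ/k : ℕ):ℤ) + ((h*μ%k : ℕ):ℤ) = (h:ℤ)*μ := by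
  exact_mod_cast Nat.div_add_mod (h*μ) k

private lemma dr_e1 (h k : ℕ) (hco : Nat.Coprime h k) :
    (k:ℤ) * (∑ μ ∈ range k, ((h*μ/k : ℕ):ℤ)) = ((h:ℤ)-1) * ∑ μ ∈ range k, (μ:ℤ) := by
  have perm1 : ∑ μ ∈ range k, ((h*μ%k : ℕ):ℤ) = ∑ μ ∈ range k, (μ:ℤ) :=
    dr_perm h k hco (fun ν => (ν:ℤ))
  rw [Finset.mul_sum]
  rw [Finset.sum_congr rfl (fun μ _ => show (k:ℤ) * ((h*μ/k : ℕ):ℤ)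
      = (h:ℤ)*μ - ((h*μ%k : ℕ):ℤ) from by linear_combination dr_dm h k μ)]
  rw [Finset.sum_sub_distrib, ← Finset.mul_sum, perm1]
  ring

private lemma dr_e2 (h k : ℕ) (hco : Nat.Coprime h k) :
    (k:ℤ)^2 * (∑ μ ∈ range k, ((h*μ/k : ℕ):ℤ)^2)
      = ((h:ℤ)^2+1) * (∑ μ ∈ range k, (μ:ℤ)^2)
        - 2*(h:ℤ)*(∑ μ ∈ range k, (μ:ℤ) * ((h*μ%k : ℕ):ℤ)) := by
  have perm2 : ∑ μ ∈ range k, ((h*μ%k : ℕ):ℤ)^2 = ∑ μ ∈ range k, (μ:ℤ)^2 :=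
    dr_perm h k hco (fun ν => (ν:ℤ)^2)
  rw [Finset.mul_sum]
  rw [Finset.sum_congr rfl (fun μ _ => show (k:ℤ)^2 * ((h*μ/k : ℕ):ℤ)^2
      = (h:ℤ)^2*(μ:ℤ)^2 - 2*(h:ℤ)*((μ:ℤ) * ((h*μ%k : ℕ):ℤ)) + ((h*μ%k : ℕ):ℤ)^2 from by
    linear_combination ((k:ℤ) * ((h*μ/k : ℕ):ℤ) + (h:ℤ)*(μ:ℤ) - ((h*μ%k : ℕ):ℤ)) * dr_dm h k μ)]
  rw [Finset.sum_add_distrib, Finset.sum_sub_distrib, ← Finset.mul_sum, ← Finset.mul_sum, perm2]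
  ring

private lemma dr_e4 (h k : ℕ) :
    (h:ℤ) * (∑ ν ∈ range h, (ν:ℤ) * ((k*ν/h : ℕ):ℤ))
      = (k:ℤ) * (∑ ν ∈ range h, (ν:ℤ)^2) - ∑ ν ∈ range h, (ν:ℤ) * ((k*ν%h : ℕ):ℤ) := by
  rw [Finset.mul_sum]
  rw [Finset.sum_congr rfl (fun (ν : ℕ) _ => show (h:ℤ) * ((ν:ℤ) * ((k*ν/h : ℕ):ℤ))
      = (k:ℤ)*(ν:ℤ)^2 - (ν:ℤ) * ((k*ν%h : ℕ):ℤ) from by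
    linear_combination (ν:ℤ) * dr_dm k h ν)]
  rw [Finset.sum_sub_distrib, ← Finset.mul_sum]

private lemma dr_e3 (h k : ℕ) (hh : 0 < h) (hk : 0 < k) (hco : Nat.Coprime h k) :
    (∑ μ ∈ range k, ((h*μ/k : ℕ):ℤ)^2) + (∑ μ ∈ range k, ((h*μ/k : ℕ):ℤ))
      + 2 * (∑ ν ∈ range h, (ν:ℤ) * ((k*ν/h : ℕ):ℤ))
    = 2*((k:ℤ)-1) * ∑ ν ∈ range h, (ν:ℤ) := by
  have gauss2 : ∀ n : ℕ, ∑ i ∈ range n, 2*(i:ℤ) = n*(n-1) := by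
    intro n; rw [← Finset.mul_sum]; exact dr_sum_id n
  have stepA : ∑ μ ∈ range k, (((h*μ/k : ℕ):ℤ)^2 + ((h*μ/k : ℕ):ℤ))
      = ∑ μ ∈ range k, ∑ ν ∈ range h, (if k*ν < h*μ then 2*(ν:ℤ) else 0) := by
    refine Finset.sum_congr rfl (fun μ hμr => ?_)
    rcases Nat.eq_zero_or_pos μ with rfl | hμ1
    · simp
    · rw [← Finset.sum_filter, dr_filt2 h k hh hk hco μ hμ1 (Finset.mem_range.mp hμr),
        gauss2 (h*μ/k + 1)]
      push_cast
      ring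
  have stepC : ∀ ν ∈ range h, (∑ μ ∈ range k, (if k*ν < h*μ then 2*(ν:ℤ) else 0))
      = 2*((k:ℤ)-1)*(ν:ℤ) - 2*((ν:ℤ) * ((k*ν/h : ℕ):ℤ)) := by
    intro ν hνr
    rw [← Finset.sum_filter, Finset.sum_const, dr_filt1 h k hh ν]
    have hlt : k*ν/h + 1 ≤ k := by
      have h2 : k*ν/h < k := (Nat.div_lt_iff_lt_mul hh).mpr (by
        have h3 := Finset.mem_range.mp hνr; nlinarith)
      omega
    have hc : ((k - (k*ν/h + 1) : ℕ) : ℤ) = (k:ℤ) - ((k*ν/h : ℕ):ℤ) - 1 := by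
      push_cast [Nat.cast_sub hlt]; ring
    rw [nsmul_eq_mul, hc]; ring
  have swap : ∑ μ ∈ range k, (((h*μ/k : ℕ):ℤ)^2 + ((h*μ/k : ℕ):ℤ))
      = ∑ ν ∈ range h, (2*((k:ℤ)-1)*(ν:ℤ) - 2*((ν:ℤ) * ((k*ν/h : ℕ):ℤ))) := by
    rw [stepA, Finset.sum_comm]
    exact Finset.sum_congr rfl stepC
  rw [Finset.sum_add_distrib, Finset.sum_sub_distrib, ← Finset.mul_sum, ← Finset.mul_sum] at swap
  linarith [swap]

private lemma dr_key (h k : ℕ) (hh : 0 < h) (hk : 0 < k) (hco : Nat.Coprime h k) :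
    12*(h:ℤ)^2 * (∑ μ ∈ range k, (μ:ℤ) * ((h*μ%k : ℕ):ℤ))
      + 12*(k:ℤ)^2 * (∑ ν ∈ range h, (ν:ℤ) * ((k*ν%h : ℕ):ℤ))
    = (h:ℤ)*(k:ℤ)*((h:ℤ)^2+(k:ℤ)^2+1) + 3*(h:ℤ)^2*(k:ℤ)^2*((h:ℤ)+(k:ℤ)) - 9*(h:ℤ)^2*(k:ℤ)^2 := by
  have e1 := dr_e1 h k hco
  have e2 := dr_e2 h k hco
  have e3 := dr_e3 h k hh hk hco
  have e4 := dr_e4 h k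
  have e5 := dr_sum_id k
  have e6 := dr_sum_id h
  have e7 := dr_sum_sq k
  have e8 := dr_sum_sq h
  linear_combination (6*(h:ℤ)) * e2 + (-6*(h:ℤ)*(k:ℤ)^2) * e3 + (12*(k:ℤ)^2) * e4
    + (6*(h:ℤ)*(k:ℤ)) * e1 + (3*(h:ℤ)*(k:ℤ)*((h:ℤ)-1)) * e5 + (-6*(h:ℤ)*(k:ℤ)^2*((k:ℤ)-1)) * e6
    + ((h:ℤ)*((h:ℤ)^2+1)) * e7 + (2*(k:ℤ)^3) * e8

private lemma dr_saw_zero : sawtooth 0 = 0 := by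
  rw [sawtooth, if_pos ⟨0, by norm_num⟩]

private lemma dr_saw_frac (a k : ℕ) (h1 : 0 < a) (h2 : a < k) :
    sawtooth ((a:ℝ)/k) = (a:ℝ)/k - 1/2 := by
  have hk0 : (0:ℝ) < k := by exact_mod_cast Nat.lt_of_le_of_lt (Nat.zero_le a) h2
  have hni : ¬ ∃ n : ℤ, (a:ℝ)/k = (n:ℝ) := by
    rintro ⟨n, hn⟩
    rw [div_eq_iff (ne_of_gt hk0)] at hn
    have hZ : (a:ℤ) = n * k := by exact_mod_cast hn
    have ha1 : (0:ℤ) < a := by exact_mod_cast h1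
    have ha2 : (a:ℤ) < k := by exact_mod_cast h2
    rcases le_or_gt n 0 with H | H
    · nlinarith
    · nlinarith
  rw [sawtooth, if_neg hni, Int.fract_eq_self.mpr ⟨by positivity, by
    rw [div_lt_one hk0]; exact_mod_cast h2⟩]

private lemma dr_saw_shift (q a k : ℕ) (h1 : 0 < a) (h2 : a < k) :
    sawtooth ((q:ℝ) + (a:ℝ)/k) = (a:ℝ)/k - 1/2 := by
  have hk0 : (0:ℝ) < k := by exact_mod_cast Nat.lt_of_le_of_lt (Nat.zero_le a) h2
  have hni0 : ¬ ∃ n : ℤ, (a:ℝ)/k = (n:ℝ) := by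
    intro ⟨n, hn⟩
    rw [div_eq_iff (ne_of_gt hk0)] at hn
    have hZ : (a:ℤ) = n * k := by exact_mod_cast hn
    have ha1 : (0:ℤ) < a := by exact_mod_cast h1
    have ha2 : (a:ℤ) < k := by exact_mod_cast h2
    rcases le_or_gt n 0 with H | H
    · nlinarith
    · nlinarith
  have hni : ¬ ∃ n : ℤ, (q:ℝ) + (a:ℝ)/k = (n:ℝ) := by
    rintro ⟨n, hn⟩
    exact hni0 ⟨n - q, by push_cast; linarith⟩
  rw [sawtooth, if_neg hni, Int.fract_natCast_add, Int.fract_eq_self.mpr ⟨by positivity, by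
    rw [div_lt_one hk0]; exact_mod_cast h2⟩]

private lemma dr_r1 (h k : ℕ) (hk : 0 < k) (hco : Nat.Coprime h k) :
    dedekindSum h k = (∑ μ ∈ range k, (μ:ℝ) * ((h*μ%k : ℕ):ℝ))/(k:ℝ)^2 - ((k:ℝ)-1)/4 := by
  have hk0 : (0:ℝ) < k := by exact_mod_cast hk
  have main : ∀ μ : ℕ, 1 ≤ μ → μ < k →
      sawtooth ((h:ℝ)*(μ:ℝ)/(k:ℝ)) * sawtooth ((μ:ℝ)/(k:ℝ))
        = (((h*μ%k : ℕ):ℝ)/(k:ℝ) - 1/2) * ((μ:ℝ)/(k:ℝ) - 1/2) := by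
    intro μ h1 h2
    have hr1 : 0 < h*μ % k := Nat.pos_of_ne_zero (dr_mod_ne h k μ hco h1 h2)
    have hr2 : h*μ % k < k := Nat.mod_lt _ hk
    have hq : (h:ℝ)*(μ:ℝ)/(k:ℝ) = ((h*μ/k : ℕ):ℝ) + ((h*μ%k : ℕ):ℝ)/(k:ℝ) := by
      have hdmR : (k:ℝ) * ((h*μ/k : ℕ):ℝ) + ((h*μ%k : ℕ):ℝ) = (h:ℝ)*μ := by
        exact_mod_cast Nat.div_add_mod (h*μ) k
      field_simp
      linarith [hdmR]
    rw [hq, dr_saw_shift _ _ _ hr1 hr2, dr_saw_frac μ k h1 h2]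
  obtain ⟨k', rfl⟩ : ∃ k', k = k'+1 := ⟨k-1, by omega⟩
  have L : dedekindSum h (k'+1) = ∑ i ∈ range k',
      sawtooth ((h:ℝ)*((i+1 : ℕ):ℝ)/(((k'+1 : ℕ)):ℝ)) * sawtooth (((i+1 : ℕ):ℝ)/(((k'+1 : ℕ)):ℝ)) := by
    rw [dedekindSum, Finset.sum_range_succ']
    simp [dr_saw_zero]
  have C : ∑ i ∈ range k',
      sawtooth ((h:ℝ)*((i+1 : ℕ):ℝ)/(((k'+1 : ℕ)):ℝ)) * sawtooth (((i+1 : ℕ):ℝ)/(((k'+1 : ℕ)):ℝ))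
      = ∑ i ∈ range k',
      (((h*(i+1)%(k'+1) : ℕ):ℝ)/(((k'+1 : ℕ)):ℝ) - 1/2) * (((i+1 : ℕ):ℝ)/(((k'+1 : ℕ)):ℝ) - 1/2) := by
    refine Finset.sum_congr rfl (fun i hi => ?_)
    exact main (i+1) (by omega) (by have := Finset.mem_range.mp hi; omega)
  have Rr : ∑ μ ∈ range (k'+1),
      (((h*μ%(k'+1) : ℕ):ℝ)/(((k'+1 : ℕ)):ℝ) - 1/2) * (((μ : ℕ):ℝ)/(((k'+1 : ℕ)):ℝ) - 1/2)
      = (∑ i ∈ range k',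
      (((h*(i+1)%(k'+1) : ℕ):ℝ)/(((k'+1 : ℕ)):ℝ) - 1/2) * (((i+1 : ℕ):ℝ)/(((k'+1 : ℕ)):ℝ) - 1/2)) + 1/4 := by
    rw [Finset.sum_range_succ']
    norm_num
  have hform : dedekindSum h (k'+1) + 1/4 = ∑ μ ∈ range (k'+1),
      (((h*μ%(k'+1) : ℕ):ℝ)/(((k'+1 : ℕ)):ℝ) - 1/2) * (((μ : ℕ):ℝ)/(((k'+1 : ℕ)):ℝ) - 1/2) := by
    rw [L, C, Rr]
  set k := k' + 1
  have hexp : ∑ μ ∈ range k,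
      (((h*μ%k : ℕ):ℝ)/((k:ℕ):ℝ) - 1/2) * (((μ:ℕ):ℝ)/((k:ℕ):ℝ) - 1/2)
      = (∑ μ ∈ range k, (μ:ℝ) * ((h*μ%k : ℕ):ℝ))/(k:ℝ)^2
        - (∑ μ ∈ range k, (μ:ℝ))/(2*(k:ℝ))
        - (∑ μ ∈ range k, ((h*μ%k : ℕ):ℝ))/(2*(k:ℝ)) + (k:ℝ)*(1/4) := by
    rw [Finset.sum_congr rfl (fun (μ : ℕ) _ => show
        (((h*μ%k : ℕ):ℝ)/((k:ℕ):ℝ) - 1/2) * (((μ:ℕ):ℝ)/((k:ℕ):ℝ) - 1/2)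
        = ((μ:ℝ) * ((h*μ%k : ℕ):ℝ))/(k:ℝ)^2 - (μ:ℝ)/(2*(k:ℝ))
          - ((h*μ%k : ℕ):ℝ)/(2*(k:ℝ)) + 1/4 from by field_simp; ring)]
    rw [Finset.sum_add_distrib, Finset.sum_sub_distrib, Finset.sum_sub_distrib,
      ← Finset.sum_div, ← Finset.sum_div, ← Finset.sum_div, Finset.sum_const,
      Finset.card_range, nsmul_eq_mul]
  have permR : ∑ μ ∈ range k, ((h*μ%k : ℕ):ℝ) = ∑ μ ∈ range k, (μ:ℝ) :=
    dr_perm h k hco (fun ν => (ν:ℝ))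
  have gaussR : 2 * ∑ μ ∈ range k, (μ:ℝ) = (k:ℝ)*((k:ℝ)-1) := by
    have h0 : ((2 * ∑ i ∈ range k, (i:ℤ) : ℤ) : ℝ) = (((k:ℤ)*((k:ℤ)-1) : ℤ) : ℝ) :=
      congrArg (Int.cast : ℤ → ℝ) (dr_sum_id k)
    push_cast at h0
    push_cast
    exact h0
  rw [hexp, permR] at hform
  have hS1 : ∑ μ ∈ range k, (μ:ℝ) = (k:ℝ)*((k:ℝ)-1)/2 := by linarith
  rw [hS1] at hform
  have hfin : dedekindSum h k = (∑ μ ∈ range k, (μ:ℝ) * ((h*μ%k : ℕ):ℝ))/(k:ℝ)^2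
      - ((k:ℝ)*((k:ℝ)-1)/2)/(2*(k:ℝ)) - ((k:ℝ)*((k:ℝ)-1)/2)/(2*(k:ℝ)) + (k:ℝ)*(1/4) - 1/4 := by
    linarith
  rw [hfin]
  field_simp
  ring

end DedekindRecipAux

open DedekindRecipAux Finset in
theorem dedekind_reciprocity (h k : ℕ) (hh : 0 < h) (hk : 0 < k)
    (hco : Nat.Coprime h k) :
    dedekindSum h k + dedekindSum k h =
      1/12 * ((h : ℝ)/k + 1/((h : ℝ)*k) + (k : ℝ)/h) - 1/4 := by
  have hh0 : (h:ℝ) ≠ 0 := by positivity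
  have hk0 : (k:ℝ) ≠ 0 := by positivity
  have keyZ := dr_key h k hh hk hco
  have keyR : 12*(h:ℝ)^2 * (∑ μ ∈ range k, (μ:ℝ) * ((h*μ%k : ℕ):ℝ))
      + 12*(k:ℝ)^2 * (∑ ν ∈ range h, (ν:ℝ) * ((k*ν%h : ℕ):ℝ))
      = (h:ℝ)*(k:ℝ)*((h:ℝ)^2+(k:ℝ)^2+1) + 3*(h:ℝ)^2*(k:ℝ)^2*((h:ℝ)+(k:ℝ)) - 9*(h:ℝ)^2*(k:ℝ)^2 := by
    have := congrArg (Int.cast : ℤ → ℝ) keyZ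
    simp only [Int.cast_add, Int.cast_sub, Int.cast_mul, Int.cast_pow, Int.cast_sum, Int.cast_natCast, Int.cast_ofNat, Int.cast_one] at this
    convert this using 2 <;> push_cast <;> ring
  rw [dr_r1 h k hk hco, dr_r1 k h hh hco.symm]
  have hne : (12:ℝ)*(h:ℝ)^2*(k:ℝ)^2 ≠ 0 := by positivity
  refine mul_left_cancel₀ hne ?_
  have expL : 12*(h:ℝ)^2*(k:ℝ)^2 *
      ((∑ μ ∈ range k, (μ:ℝ) * ((h*μ%k : ℕ):ℝ))/(k:ℝ)^2 - ((k:ℝ)-1)/4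
        + ((∑ ν ∈ range h, (ν:ℝ) * ((k*ν%h : ℕ):ℝ))/(h:ℝ)^2 - ((h:ℝ)-1)/4))
      = 12*(h:ℝ)^2 * (∑ μ ∈ range k, (μ:ℝ) * ((h*μ%k : ℕ):ℝ))
        + 12*(k:ℝ)^2 * (∑ ν ∈ range h, (ν:ℝ) * ((k*ν%h : ℕ):ℝ))
        - 3*(h:ℝ)^2*(k:ℝ)^2*((k:ℝ)-1) - 3*(h:ℝ)^2*(k:ℝ)^2*((h:ℝ)-1) := by
    field_simp
    ring
  have expR : 12*(h:ℝ)^2*(k:ℝ)^2 * (1/12 * ((h : ℝ)/k + 1/((h : ℝ)*k) + (k : ℝ)/h) - 1/4)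
      = (h:ℝ)*(k:ℝ)*((h:ℝ)^2+(k:ℝ)^2+1) - 3*(h:ℝ)^2*(k:ℝ)^2 := by
    field_simp
    ring
  rw [expL, expR]
  linear_combination keyR
end

section
/- Let h and k be coprime positive integers and let t be a positive real number. If hkt ∉ ℤ, then #{(x,y) ∈ ℤ² : x ≥ 0, y ≥ 0, kx + hy = hkt} = 0. If hkt = n is a positive integer, then #{(x,y) ∈ ℤ² : x ≥ 0, y ≥ 0, kx + hy = n} = n/(hk) − {h'n/k} − {k'n/h} + 1, where h' is any integer with h'h ≡ 1 (mod k) and k' is any integer with k'k ≡ 1 (mod h). -/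
open Real

private theorem fract_int_div' (a b : ℤ) (hb : 0 < b) :
    Int.fract ((a:ℝ)/b) = ((a % b : ℤ):ℝ)/b := by
  have hb' : (0:ℝ) < (b:ℝ) := by exact_mod_cast hb
  have key : (a:ℝ) = ((b:ℝ)) * ((a/b : ℤ):ℝ) + ((a%b : ℤ):ℝ) := by
    exact_mod_cast (Int.mul_ediv_add_emod a b).symm
  have h1 : (a:ℝ)/b = ((a / b : ℤ) : ℝ) + ((a % b : ℤ):ℝ)/b := by
    field_simp
    linarith
  rw [h1, Int.fract_intCast_add, Int.fract_eq_self.mpr]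
  constructor
  · apply div_nonneg _ hb'.le
    exact_mod_cast Int.emod_nonneg a hb.ne'
  · rw [div_lt_one hb']
    exact_mod_cast Int.emod_lt_of_pos a hb

/-- The number of lattice points on the dilated hypotenuse of the right triangle with
legs `h, k`: zero when `hkt ∉ ℤ`, and given by Popoviciu's formula when `hkt = n ∈ ℤ_{>0}`. -/
theorem lattice_points_on_hypotenuse (h k : ℕ) (hh : 0 < h) (hk : 0 < k)
    (hco : Nat.Coprime h k) (t : ℝ) (ht : 0 < t) :
    ((¬ ∃ m : ℤ, (h : ℝ) * k * t = (m : ℝ)) →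
      Set.ncard {p : ℤ × ℤ | 0 ≤ p.1 ∧ 0 ≤ p.2 ∧
        (k : ℝ) * p.1 + (h : ℝ) * p.2 = (h : ℝ) * k * t} = 0)
    ∧ (∀ n : ℕ, 0 < n → (h : ℝ) * k * t = (n : ℝ) →
        ∀ h' k' : ℤ, h' * (h : ℤ) ≡ 1 [ZMOD (k : ℤ)] → k' * (k : ℤ) ≡ 1 [ZMOD (h : ℤ)] →
          (Set.ncard {p : ℤ × ℤ | 0 ≤ p.1 ∧ 0 ≤ p.2 ∧
              (k : ℤ) * p.1 + (h : ℤ) * p.2 = (n : ℤ)} : ℝ) =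
            (n : ℝ) / ((h : ℝ) * k) - Int.fract ((h' : ℝ) * n / k)
              - Int.fract ((k' : ℝ) * n / h) + 1) := by
  have hhZ : (0:ℤ) < (h:ℤ) := by exact_mod_cast hh
  have hkZ : (0:ℤ) < (k:ℤ) := by exact_mod_cast hk
  constructor
  · intro hne
    have : {p : ℤ × ℤ | 0 ≤ p.1 ∧ 0 ≤ p.2 ∧
        (k : ℝ) * p.1 + (h : ℝ) * p.2 = (h : ℝ) * k * t} = ∅ := by
      ext p
      simp only [Set.mem_setOf_eq, Set.mem_empty_iff_false, iff_false, not_and]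
      intro _ _ hp
      exact hne ⟨(k:ℤ) * p.1 + (h:ℤ) * p.2, by push_cast; linarith⟩
    rw [this, Set.ncard_empty]
  · intro n hn hnt h' k' hh' hk'
    have hnZ : (1:ℤ) ≤ (n:ℤ) := by exact_mod_cast hn
    set x₀ : ℤ := (k' * n) % h with hx₀def
    set y₀ : ℤ := (h' * n) % k with hy₀def
    have hx₀0 : 0 ≤ x₀ := Int.emod_nonneg _ hhZ.ne'
    have hx₀h : x₀ < h := Int.emod_lt_of_pos _ hhZ
    have hy₀0 : 0 ≤ y₀ := Int.emod_nonneg _ hkZ.ne'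
    have hy₀k : y₀ < k := Int.emod_lt_of_pos _ hkZ
    have ex : x₀ ≡ k' * n [ZMOD (h:ℤ)] := Int.emod_emod_of_dvd _ dvd_rfl
    have ey : y₀ ≡ h' * n [ZMOD (k:ℤ)] := Int.emod_emod_of_dvd _ dvd_rfl
    have hxm : (k:ℤ) * x₀ ≡ (n:ℤ) [ZMOD (h:ℤ)] := by
      calc (k:ℤ) * x₀ ≡ (k:ℤ) * (k' * n) [ZMOD (h:ℤ)] := ex.mul_left _
        _ = (k' * k) * n := by ring
        _ ≡ 1 * n [ZMOD (h:ℤ)] := hk'.mul_right _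
        _ = (n:ℤ) := one_mul _
    have hym : (h:ℤ) * y₀ ≡ (n:ℤ) [ZMOD (k:ℤ)] := by
      calc (h:ℤ) * y₀ ≡ (h:ℤ) * (h' * n) [ZMOD (k:ℤ)] := ey.mul_left _
        _ = (h' * h) * n := by ring
        _ ≡ 1 * n [ZMOD (k:ℤ)] := hh'.mul_right _
        _ = (n:ℤ) := one_mul _
    have hcomb : (k:ℤ) * x₀ + (h:ℤ) * y₀ ≡ (n:ℤ) [ZMOD (h:ℤ) * k] := by
      rw [← Int.modEq_and_modEq_iff_modEq_mul (by simpa using hco)]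
      constructor
      · have h0 : (h:ℤ) * y₀ ≡ 0 [ZMOD (h:ℤ)] :=
          Int.modEq_zero_iff_dvd.mpr (dvd_mul_right _ _)
        simpa using hxm.add h0
      · have h0 : (k:ℤ) * x₀ ≡ 0 [ZMOD (k:ℤ)] :=
          Int.modEq_zero_iff_dvd.mpr (dvd_mul_right _ _)
        simpa using h0.add hym
    have hdvd : (h:ℤ) * k ∣ (n:ℤ) - (k:ℤ) * x₀ - (h:ℤ) * y₀ := by
      have := hcomb.dvd
      rwa [show (n:ℤ) - ((k:ℤ) * x₀ + (h:ℤ) * y₀) = (n:ℤ) - (k:ℤ)*x₀ - (h:ℤ)*y₀ from by ring]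
        at this
    set M : ℤ := ((n:ℤ) - (k:ℤ) * x₀ - (h:ℤ) * y₀) / ((h:ℤ) * k) with hMdef
    have hM : (h:ℤ) * k * M = (n:ℤ) - (k:ℤ) * x₀ - (h:ℤ) * y₀ := Int.mul_ediv_cancel' hdvd
    have hM1 : -1 ≤ M := by
      have h2 : (-2) * ((h:ℤ)*k) < (h:ℤ)*k*M := by nlinarith
      by_contra hc
      push_neg at hc
      have : M ≤ -2 := by omega
      nlinarith [mul_pos hhZ hkZ]
    set f : ℤ → ℤ × ℤ := fun m => ((x₀ + m * h : ℤ), (y₀ + (M - m) * k : ℤ)) with hfdef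
    have hcop : IsCoprime (h:ℤ) (k:ℤ) := Nat.isCoprime_iff_coprime.mpr hco
    have hset : {p : ℤ × ℤ | 0 ≤ p.1 ∧ 0 ≤ p.2 ∧
        (k : ℤ) * p.1 + (h : ℤ) * p.2 = (n : ℤ)} = f '' (Set.Icc 0 M) := by
      ext p
      simp only [Set.mem_setOf_eq, Set.mem_image, Set.mem_Icc, hfdef]
      constructor
      · rintro ⟨hp1, hp2, hp3⟩
        have hdvd2 : (h:ℤ) ∣ (k:ℤ) * (p.1 - x₀) :=
          ⟨(k:ℤ)*M + y₀ - p.2, by linear_combination hp3 - hM⟩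
        obtain ⟨m, hm⟩ := hcop.dvd_of_dvd_mul_left hdvd2
        have hm0 : 0 ≤ m := by
          by_contra hc
          push_neg at hc
          have h1 : (h:ℤ) * m ≤ (h:ℤ) * (-1) := mul_le_mul_of_nonneg_left (by omega) hhZ.le
          linarith
        have hp2eq : p.2 = y₀ + (M - m) * k := by
          have h0 : (h:ℤ) * (p.2 - (y₀ + (M - m) * k)) = 0 := by
            linear_combination hp3 - hM - (k:ℤ) * hm
          have := (mul_eq_zero.mp h0).resolve_left hhZ.ne'
          linarith
        have hmM : m ≤ M := by
          by_contra hc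
          push_neg at hc
          have h1 : (M - m) * k ≤ (-1) * k := mul_le_mul_of_nonneg_right (by omega) hkZ.le
          linarith
        exact ⟨m, ⟨hm0, hmM⟩, by
          rw [Prod.ext_iff]
          exact ⟨by simp; linarith, by simp [hp2eq]⟩⟩
      · rintro ⟨m, ⟨hm0, hmM⟩, rfl⟩
        refine ⟨?_, ?_, ?_⟩
        · simp only
          nlinarith
        · simp only
          nlinarith [mul_nonneg (show (0:ℤ) ≤ M - m by omega) hkZ.le]
        · simp only
          linear_combination hM
    have hinj : Set.InjOn f (Set.Icc 0 M) := by
      intro a _ b _ hab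
      have h1 : x₀ + a * h = x₀ + b * h := congrArg Prod.fst hab
      have h2 : a * h = b * h := by linarith
      exact mul_right_cancel₀ hhZ.ne' h2
    have hIcc : (Set.Icc (0:ℤ) M).ncard = (M+1).toNat := by
      rw [← Finset.coe_Icc, Set.ncard_coe_finset, Int.card_Icc]
      norm_num
    have hfr1 : Int.fract ((h':ℝ) * n / k) = (y₀:ℝ)/k := by
      have t1 := fract_int_div' (h' * (n:ℤ)) (k:ℤ) hkZ
      push_cast at t1
      exact t1
    have hfr2 : Int.fract ((k':ℝ) * n / h) = (x₀:ℝ)/h := by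
      have t1 := fract_int_div' (k' * (n:ℤ)) (h:ℤ) hhZ
      push_cast at t1
      exact t1
    have hMreal : (h:ℝ) * k * (M:ℝ) = (n:ℝ) - (k:ℝ) * (x₀:ℝ) - (h:ℝ) * (y₀:ℝ) := by
      exact_mod_cast hM
    have hh0 : (h:ℝ) ≠ 0 := by positivity
    have hk0 : (k:ℝ) ≠ 0 := by positivity
    have hdivn : (n:ℝ) / ((h:ℝ) * k) = (M:ℝ) + (x₀:ℝ)/h + (y₀:ℝ)/k := by
      field_simp
      linarith
    rw [hset, Set.ncard_image_of_injOn hinj, hIcc, hfr1, hfr2, hdivn]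
    have hcast : (((M+1).toNat : ℕ) : ℝ) = (M:ℝ) + 1 := by
      have := Int.toNat_of_nonneg (show (0:ℤ) ≤ M + 1 by omega)
      exact_mod_cast this
    rw [hcast]
    ring
end

section
/- (Popoviciu) Let a and b be coprime positive integers. Then for every nonnegative integer n, the number of representations of n as a nonnegative integer combination of a and b is #{(x,y) ∈ ℤ² : x ≥ 0, y ≥ 0, ax + by = n} = n/(ab) − {b⁻¹n/a} − {a⁻¹n/b} + 1, where a⁻¹ is any integer with a⁻¹a ≡ 1 (mod b) and b⁻¹ is any integer with b⁻¹b ≡ 1 (mod a). -/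
open Real

private lemma fract_div_congr {c d b : ℤ} (hb : 0 < b) (h : c ≡ d [ZMOD b]) :
    Int.fract ((c : ℝ) / b) = Int.fract ((d : ℝ) / b) := by
  have key : ∀ e : ℤ, Int.fract ((e : ℝ) / b) = ((e % b : ℤ) : ℝ) / b := by
    intro e
    have hb' : (0:ℝ) < (b:ℝ) := by exact_mod_cast hb
    have h0 : (e:ℝ) = (b:ℝ) * ((e / b : ℤ):ℝ) + ((e % b : ℤ):ℝ) := by
      exact_mod_cast (Int.mul_ediv_add_emod e b).symm
    have h1 : (e : ℝ) / b = ((e / b : ℤ) : ℝ) + ((e % b : ℤ) : ℝ) / b := by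
      rw [h0]; field_simp
    rw [h1, Int.fract_intCast_add, Int.fract_eq_self.mpr]
    constructor
    · apply div_nonneg _ hb'.le
      exact_mod_cast Int.emod_nonneg e (by omega)
    · exact (div_lt_one hb').mpr (by exact_mod_cast Int.emod_lt_of_pos e hb)
  have h' : c % b = d % b := h
  rw [key, key, h']

set_option maxHeartbeats 1000000 in
/-- **Popoviciu's theorem.** For coprime positive integers `a, b` and a nonnegative
integer `n`, the number of representations of `n` as a nonnegative integer combination
of `a` and `b` is `n/(ab) − {b⁻¹n/a} − {a⁻¹n/b} + 1`, where `a⁻¹a ≡ 1 (mod b)` and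
`b⁻¹b ≡ 1 (mod a)`. -/
theorem popoviciu (a b : ℕ) (ha : 0 < a) (hb : 0 < b) (hco : Nat.Coprime a b)
    (n : ℕ) (a' b' : ℤ)
    (ha' : a' * (a : ℤ) ≡ 1 [ZMOD (b : ℤ)]) (hb' : b' * (b : ℤ) ≡ 1 [ZMOD (a : ℤ)]) :
    (Set.ncard {p : ℤ × ℤ | 0 ≤ p.1 ∧ 0 ≤ p.2 ∧
        (a : ℤ) * p.1 + (b : ℤ) * p.2 = (n : ℤ)} : ℝ) =
      (n : ℝ) / ((a : ℝ) * b) - Int.fract ((b' : ℝ) * n / a)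
        - Int.fract ((a' : ℝ) * n / b) + 1 := by
  have haZ : (0:ℤ) < (a:ℤ) := by exact_mod_cast ha
  have hbZ : (0:ℤ) < (b:ℤ) := by exact_mod_cast hb
  have haR : (0:ℝ) < (a:ℝ) := by exact_mod_cast ha
  have hbR : (0:ℝ) < (b:ℝ) := by exact_mod_cast hb
  have hn0 : (0:ℤ) ≤ (n:ℤ) := Int.natCast_nonneg n
  set r : ℤ := (b' * n) % a with hr_def
  have hr0 : 0 ≤ r := Int.emod_nonneg _ (by omega)
  have hra : r < a := Int.emod_lt_of_pos _ haZ
  have hr_cong : r ≡ b' * n [ZMOD (a:ℤ)] := Int.emod_emod_of_dvd _ dvd_rfl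
  have hbr : (b:ℤ) * r ≡ (n:ℤ) [ZMOD (a:ℤ)] := by
    calc (b:ℤ) * r ≡ (b:ℤ) * (b' * n) [ZMOD (a:ℤ)] := hr_cong.mul_left _
      _ = (b' * b) * n := by ring
      _ ≡ 1 * n [ZMOD (a:ℤ)] := hb'.mul_right _
      _ = (n:ℤ) := by ring
  have hdvd : (a:ℤ) ∣ (n:ℤ) - (b:ℤ) * r := hbr.dvd
  set m : ℤ := ((n:ℤ) - (b:ℤ) * r) / a with hm_def
  have ham : (a:ℤ) * m = (n:ℤ) - (b:ℤ) * r := Int.mul_ediv_cancel' hdvd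
  set k : ℤ := m / b with hk_def
  -- lower bound on k
  have hmb : -(b:ℤ) < m := by
    by_contra h
    push_neg at h
    have h1 : (a:ℤ) * m ≤ (a:ℤ) * (-(b:ℤ)) := mul_le_mul_of_nonneg_left h haZ.le
    have h2 : (b:ℤ) * r ≤ (b:ℤ) * ((a:ℤ) - 1) :=
      mul_le_mul_of_nonneg_left (by omega) hbZ.le
    nlinarith [ham]
  have hk1 : -1 ≤ k := by
    have h1 : (-(b:ℤ)) / b ≤ k := Int.ediv_le_ediv hbZ hmb.le
    have h2 : (-(b:ℤ)) / b = -1 := by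
      rw [show (-(b:ℤ)) = b * (-1) by ring, Int.mul_ediv_cancel_left _ (by omega)]
    omega
  -- floor of m / b
  have hfloor : ⌊(m:ℝ) / (b:ℝ)⌋ = k := by
    rw [Int.floor_eq_iff]
    constructor
    · rw [le_div_iff₀ hbR]
      exact_mod_cast Int.ediv_mul_le m (by omega : (b:ℤ) ≠ 0)
    · rw [div_lt_iff₀ hbR]
      exact_mod_cast Int.lt_ediv_add_one_mul_self m hbZ
  -- congruence: a' * n ≡ m mod b
  have hcop : IsCoprime (b:ℤ) (a:ℤ) := (Nat.isCoprime_iff_coprime.mpr hco).symm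
  have hm_cong : a' * (n:ℤ) ≡ m [ZMOD (b:ℤ)] := by
    have hd1 : (b:ℤ) ∣ a' * a - 1 := (Int.ModEq.dvd (Int.ModEq.symm ha'))
    obtain ⟨c, hc⟩ := hd1
    have hd2 : (b:ℤ) ∣ (a:ℤ) * (m - a' * n) := by
      refine ⟨-r - n * c, ?_⟩
      linear_combination ham - (n:ℤ) * hc
    have hd3 : (b:ℤ) ∣ m - a' * n := hcop.dvd_of_dvd_mul_left hd2
    exact (Int.modEq_iff_dvd.mpr hd3)
  -- parametrization of the solution set
  set S : Set (ℤ × ℤ) := {p : ℤ × ℤ | 0 ≤ p.1 ∧ 0 ≤ p.2 ∧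
        (a : ℤ) * p.1 + (b : ℤ) * p.2 = (n : ℤ)} with hS_def
  have hSeq : S = (fun t : ℤ => (m - b * t, r + a * t)) '' Set.Icc 0 k := by
    ext ⟨x, y⟩
    simp only [hS_def, Set.mem_setOf_eq, Set.mem_image, Set.mem_Icc, Prod.mk.injEq]
    constructor
    · rintro ⟨hx, hy, hxy⟩
      have h1 : (b:ℤ) * y ≡ (n:ℤ) [ZMOD (a:ℤ)] := by
        refine Int.modEq_iff_dvd.mpr ⟨x, ?_⟩
        linarith [hxy]
      have hy_cong : y ≡ r [ZMOD (a:ℤ)] := by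
        calc y = 1 * y := by ring
          _ ≡ (b' * b) * y [ZMOD (a:ℤ)] := (hb'.symm).mul_right _
          _ = b' * ((b:ℤ) * y) := by ring
          _ ≡ b' * (n:ℤ) [ZMOD (a:ℤ)] := h1.mul_left _
          _ ≡ r [ZMOD (a:ℤ)] := hr_cong.symm
      obtain ⟨t, ht⟩ := (Int.ModEq.dvd hy_cong.symm)
      have hty : y = r + a * t := by linarith [ht]
      have htx : x = m - b * t := by
        have hax : (a:ℤ) * x = (a:ℤ) * (m - b * t) := by
          linear_combination hxy - ham - (b:ℤ) * hty
        exact mul_left_cancel₀ (by omega) hax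
      refine ⟨t, ⟨?_, ?_⟩, htx.symm, hty.symm⟩
      · by_contra h
        push_neg at h
        have h2 : t ≤ -1 := by omega
        have h3 : (a:ℤ) * t ≤ (a:ℤ) * (-1) := mul_le_mul_of_nonneg_left h2 haZ.le
        linarith [hy, hty]
      · rw [hk_def, Int.le_ediv_iff_mul_le hbZ]
        have := mul_comm t (b:ℤ)
        linarith [hx, htx]
    · rintro ⟨t, ⟨ht0, htk⟩, hx, hy⟩
      have hbtm : t * b ≤ m := (Int.le_ediv_iff_mul_le hbZ).mp htk
      have hat : 0 ≤ (a:ℤ) * t := mul_nonneg haZ.le ht0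
      have hcm := mul_comm t (b:ℤ)
      subst hx
      subst hy
      refine ⟨by linarith, by linarith, by linear_combination ham⟩
  -- injectivity and cardinality
  have hinj : Function.Injective (fun t : ℤ => (m - b * t, r + a * t)) := by
    intro s t hst
    simp only [Prod.mk.injEq] at hst
    have h1 : (a:ℤ) * s = (a:ℤ) * t := by linarith [hst.2]
    exact mul_left_cancel₀ (by omega) h1
  have hcard : S.ncard = (k + 1).toNat := by
    rw [hSeq, Set.ncard_image_of_injective _ hinj, ← Finset.coe_Icc,
      Set.ncard_coe_finset, Int.card_Icc]
    norm_num
  -- now compute the right-hand side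
  have hfr1 : Int.fract ((b' : ℝ) * n / a) = (r:ℝ) / a := by
    have h1 : ((b':ℝ) * n / a) = ((b' * n : ℤ) : ℝ) / ((a:ℤ):ℝ) := by push_cast; ring
    have h2 : Int.fract (((b' * n : ℤ) : ℝ) / ((a:ℤ):ℝ)) = Int.fract (((r:ℤ):ℝ) / ((a:ℤ):ℝ)) :=
      fract_div_congr haZ hr_cong.symm
    rw [h1, h2]
    push_cast
    rw [Int.fract_eq_self.mpr ⟨div_nonneg (by exact_mod_cast hr0) haR.le,
      by rw [div_lt_one haR]; exact_mod_cast hra⟩]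
  have hfr2 : Int.fract ((a' : ℝ) * n / b) = Int.fract ((m:ℝ) / b) := by
    have h1 : ((a':ℝ) * n / b) = ((a' * n : ℤ) : ℝ) / ((b:ℤ):ℝ) := by push_cast; ring
    rw [h1]
    exact fract_div_congr hbZ hm_cong
  have hmain : (n : ℝ) / ((a : ℝ) * b) - (r:ℝ)/a = (m:ℝ) / b := by
    have hn : (n:ℝ) = (a:ℝ) * m + (b:ℝ) * r := by
      exact_mod_cast (by linarith [ham] : (n:ℤ) = a * m + b * r)
    rw [hn]
    field_simp
    ring
  have hfract : Int.fract ((m:ℝ)/b) = (m:ℝ)/b - (k:ℝ) := by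
    rw [← Int.self_sub_floor, hfloor]
  have htn : ((k+1).toNat : ℝ) = (k:ℝ) + 1 := by
    have h2 : (((k+1).toNat : ℤ)) = k + 1 := Int.toNat_of_nonneg (by omega)
    exact_mod_cast h2
  rw [hfr1, hfr2, hmain, hcard, htn, hfract]
  ring
end
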